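/- arXiv:2305.15828 — 6 statements merged into one kernel-verified Lean document; each statement's English description precedes it below -/
import Mathlib

section
/- Let f : ℝ^d → ℝ be differentiable with L₂-Lipschitz gradient, bounded below with infimum f*, and satisfying the Polyak–Łojasiewicz condition with constant μ > 0. Fix x ∈ ℝ^d and let g be a square-integrable random vector in ℝ^d whose mean is E[g] = ∇f(x) + b for some b ∈ ℝ^d, and which satisfies E[‖g − E[g]‖₂²] ≤ M‖∇f(x) + b‖₂² + σ² and ‖b‖₂² ≤ m‖∇f(x)‖₂² + ζ², where M ≥ 0, σ² ≥ 0, 0 ≤ m < 1 and ζ² ≥ 0. Then for every step size 0 < η ≤ 1/((M+1)L₂), one step of biased stochastic gradient descent satisfies E[f(x − η g)] − f* ≤ (1 − ημ(1−m))(f(x) − f*) + ηζ²/2 + η²L₂σ²/2. -/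
open MeasureTheory
open scoped RealInnerProductSpace


lemma descent_lemma {d : ℕ} (f : EuclideanSpace ℝ (Fin d) → ℝ) (L : ℝ) (hL : 0 ≤ L)
    (hf : Differentiable ℝ f)
    (hlip : ∀ x y : EuclideanSpace ℝ (Fin d), ‖gradient f x - gradient f y‖ ≤ L * ‖x - y‖)
    (x y : EuclideanSpace ℝ (Fin d)) :
    f y ≤ f x + ⟪gradient f x, y - x⟫ + L / 2 * ‖y - x‖ ^ 2 := by
  set v := y - x with hv
  have hgc : Continuous (gradient f) := by
    have : LipschitzWith ⟨L, hL⟩ (gradient f) := by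
      apply LipschitzWith.of_dist_le_mul
      intro a b_
      rw [dist_eq_norm, dist_eq_norm]
      exact hlip a b_
    exact this.continuous
  have key : ∀ t : ℝ, HasDerivAt (fun s : ℝ => f (x + s • v))
      ⟪gradient f (x + t • v), v⟫ t := by
    intro t
    have h1 : HasDerivAt (fun s : ℝ => x + s • v) v t := by
      simpa using ((hasDerivAt_id t).smul_const v).const_add x
    have h2 := ((hf (x + t • v)).hasGradientAt.hasFDerivAt).comp_hasDerivAt t h1
    exact h2
  have hcont : Continuous (fun t : ℝ => ⟪gradient f (x + t • v), v⟫) := by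
    exact (hgc.comp (continuous_const.add (continuous_id.smul continuous_const))).inner
      continuous_const
  have ftc : ∫ t in (0:ℝ)..1, ⟪gradient f (x + t • v), v⟫ = f (x + (1:ℝ) • v) - f (x + (0:ℝ) • v) := by
    exact intervalIntegral.integral_eq_sub_of_hasDerivAt (fun t _ => key t)
      (hcont.intervalIntegrable 0 1)
  have hxy : x + (1:ℝ) • v = y := by rw [hv]; simp
  have hx0 : x + (0:ℝ) • v = x := by simp
  rw [hxy, hx0] at ftc
  have hmono : ∫ t in (0:ℝ)..1, ⟪gradient f (x + t • v), v⟫ ≤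
      ∫ t in (0:ℝ)..1, (⟪gradient f x, v⟫ + L * ‖v‖ ^ 2 * t) := by
    apply intervalIntegral.integral_mono_on (by norm_num) (hcont.intervalIntegrable 0 1)
      ((by continuity : Continuous fun t : ℝ => ⟪gradient f x, v⟫ + L * ‖v‖ ^ 2 * t).intervalIntegrable 0 1)
    intro t ht
    have ht0 : 0 ≤ t := ht.1
    have : ⟪gradient f (x + t • v) - gradient f x, v⟫ ≤ L * ‖v‖ ^ 2 * t := by
      calc ⟪gradient f (x + t • v) - gradient f x, v⟫
          ≤ ‖gradient f (x + t • v) - gradient f x‖ * ‖v‖ := real_inner_le_norm _ _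
        _ ≤ (L * ‖x + t • v - x‖) * ‖v‖ := by
            apply mul_le_mul_of_nonneg_right (hlip _ _) (norm_nonneg _)
        _ = L * ‖v‖ ^ 2 * t := by
            rw [show x + t • v - x = t • v by abel, norm_smul, Real.norm_eq_abs,
              abs_of_nonneg ht0]
            ring
    rw [inner_sub_left] at this
    linarith
  have hcalc : ∫ t in (0:ℝ)..1, (⟪gradient f x, v⟫ + L * ‖v‖ ^ 2 * t) =
      ⟪gradient f x, v⟫ + L / 2 * ‖v‖ ^ 2 := by
    rw [intervalIntegral.integral_add (intervalIntegrable_const)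
      ((by continuity : Continuous fun t : ℝ => L * ‖v‖ ^ 2 * t).intervalIntegrable 0 1),
      intervalIntegral.integral_const_mul, integral_id]
    simp
    ring
  rw [hcalc] at hmono
  rw [ftc] at hmono
  linarith



set_option maxHeartbeats 1000000 in
/-- One step of biased SGD for an `L₂`-smooth function satisfying the
Polyak–Łojasiewicz condition, with a biased and noisy square-integrable gradient oracle. -/
theorem one_step_biased_sgd
    {Ω : Type*} {m0 : MeasurableSpace Ω} (ℙ : Measure Ω) [IsProbabilityMeasure ℙ]
    {d : ℕ} (f : EuclideanSpace ℝ (Fin d) → ℝ) (L₂ μ fstar : ℝ)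
    (hf : Differentiable ℝ f)
    (hlip : ∀ x y : EuclideanSpace ℝ (Fin d), ‖gradient f x - gradient f y‖ ≤ L₂ * ‖x - y‖)
    (hglb : IsGLB (Set.range f) fstar)
    (hμ : 0 < μ)
    (hPL : ∀ x : EuclideanSpace ℝ (Fin d), 2 * μ * (f x - fstar) ≤ ‖gradient f x‖ ^ 2)
    (x : EuclideanSpace ℝ (Fin d)) (g : Ω → EuclideanSpace ℝ (Fin d))
    (b : EuclideanSpace ℝ (Fin d))
    (hg2 : MemLp g 2 ℙ)
    (hmean : ∫ ω, g ω ∂ℙ = gradient f x + b)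
    (M σ2 m ζ2 : ℝ) (hM : 0 ≤ M) (hσ2 : 0 ≤ σ2) (hm0 : 0 ≤ m) (hm1 : m < 1) (hζ2 : 0 ≤ ζ2)
    (hvar : ∫ ω, ‖g ω - ∫ ω', g ω' ∂ℙ‖ ^ 2 ∂ℙ ≤ M * ‖gradient f x + b‖ ^ 2 + σ2)
    (hbias : ‖b‖ ^ 2 ≤ m * ‖gradient f x‖ ^ 2 + ζ2)
    (η : ℝ) (hη0 : 0 < η) (hη : η ≤ 1 / ((M + 1) * L₂)) :
    (∫ ω, f (x - η • g ω) ∂ℙ) - fstar ≤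
      (1 - η * μ * (1 - m)) * (f x - fstar) + η * ζ2 / 2 + η ^ 2 * L₂ * σ2 / 2 := by
  -- positivity of L₂
  have hL2 : 0 < L₂ := by
    by_contra h
    push_neg at h
    have h1 : (M + 1) * L₂ ≤ 0 := mul_nonpos_of_nonneg_of_nonpos (by linarith) h
    have h2 : 1 / ((M + 1) * L₂) ≤ 0 := div_nonpos_of_nonneg_of_nonpos zero_le_one h1
    linarith
  have hη1 : η * ((M + 1) * L₂) ≤ 1 := by
    rw [le_div_iff₀ (by positivity)] at hη
    exact hη
  set G := gradient f x with hG
  set c := G + b with hc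
  have hflow : ∀ z, fstar ≤ f z := fun z => hglb.1 ⟨z, rfl⟩
  rw [hmean] at hvar
  -- integrability facts
  have hgint : Integrable g ℙ := hg2.integrable one_le_two
  have hsq : Integrable (fun ω => ‖g ω‖ ^ 2) ℙ :=
    (memLp_two_iff_integrable_sq_norm hg2.1).mp hg2
  have hin : Integrable (fun ω => ⟪G, g ω⟫) ℙ := hgint.const_inner G
  -- variance identity
  have hsub : MemLp (fun ω => g ω - c) 2 ℙ := hg2.sub (memLp_const c)
  have hsqsub : Integrable (fun ω => ‖g ω - c‖ ^ 2) ℙ :=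
    (memLp_two_iff_integrable_sq_norm hsub.1).mp hsub
  have hinc : Integrable (fun ω => ⟪c, g ω⟫) ℙ := hgint.const_inner c
  have hvar' : ∫ ω, ‖g ω - c‖ ^ 2 ∂ℙ = (∫ ω, ‖g ω‖ ^ 2 ∂ℙ) - ‖c‖ ^ 2 := by
    have hptw : ∀ ω, ‖g ω - c‖ ^ 2 = ‖g ω‖ ^ 2 - 2 * ⟪c, g ω⟫ + ‖c‖ ^ 2 := by
      intro ω
      rw [norm_sub_sq_real, real_inner_comm]
    calc ∫ ω, ‖g ω - c‖ ^ 2 ∂ℙ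
        = ∫ ω, (‖g ω‖ ^ 2 - 2 * ⟪c, g ω⟫ + ‖c‖ ^ 2) ∂ℙ := by
          exact integral_congr_ae (Filter.Eventually.of_forall hptw)
      _ = (∫ ω, ‖g ω‖ ^ 2 ∂ℙ) - 2 * ⟪c, ∫ ω, g ω ∂ℙ⟫ + ‖c‖ ^ 2 := by
          have h1 : Integrable (fun ω => ‖g ω‖ ^ 2 - 2 * ⟪c, g ω⟫) ℙ :=
            hsq.sub (hinc.const_mul 2)
          rw [integral_add h1 (integrable_const _),
            integral_sub hsq (hinc.const_mul 2), integral_const_mul, integral_inner hgint]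
          simp
      _ = (∫ ω, ‖g ω‖ ^ 2 ∂ℙ) - ‖c‖ ^ 2 := by
          rw [hmean, real_inner_self_eq_norm_sq]
          ring
  have hEg2 : ∫ ω, ‖g ω‖ ^ 2 ∂ℙ ≤ (M + 1) * ‖c‖ ^ 2 + σ2 := by
    rw [hvar'] at hvar
    nlinarith [hvar]
  -- pointwise descent bound
  set A : Ω → ℝ := fun ω => f x - η * ⟪G, g ω⟫ + η ^ 2 * L₂ / 2 * ‖g ω‖ ^ 2 with hA
  have hAint : Integrable A ℙ :=
    ((integrable_const (f x)).sub (hin.const_mul η)).add (hsq.const_mul _)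
  have hptA : ∀ ω, f (x - η • g ω) ≤ A ω := by
    intro ω
    have hd := descent_lemma f L₂ hL2.le hf hlip x (x - η • g ω)
    have h1 : x - η • g ω - x = -(η • g ω) := by abel
    rw [h1, inner_neg_right, real_inner_smul_right, norm_neg, norm_smul,
      Real.norm_eq_abs, abs_of_pos hη0] at hd
    calc f (x - η • g ω) ≤ f x + -(η * ⟪G, g ω⟫) + L₂ / 2 * (η * ‖g ω‖) ^ 2 := hd
      _ = A ω := by rw [hA]; ring
  have hFmeas : AEStronglyMeasurable (fun ω => f (x - η • g ω)) ℙ :=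
    hf.continuous.comp_aestronglyMeasurable
      (aestronglyMeasurable_const.sub (hg2.1.const_smul η))
  have hFint : Integrable (fun ω => f (x - η • g ω)) ℙ := by
    apply Integrable.mono' (hAint.abs.add (integrable_const |fstar|)) hFmeas
    apply Filter.Eventually.of_forall
    intro ω
    simp only [Pi.add_apply]
    rw [Real.norm_eq_abs, abs_le]
    constructor
    · have u1 := hflow (x - η • g ω)
      have u2 := neg_abs_le fstar
      have u3 := abs_nonneg (A ω)
      linarith
    · have u1 := hptA ω
      have u2 := le_abs_self (A ω)
      have u3 := abs_nonneg fstar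
      linarith
  have hIA : ∫ ω, f (x - η • g ω) ∂ℙ ≤ ∫ ω, A ω ∂ℙ :=
    integral_mono hFint hAint hptA
  have hIAval : ∫ ω, A ω ∂ℙ =
      f x - η * ⟪G, c⟫ + η ^ 2 * L₂ / 2 * ∫ ω, ‖g ω‖ ^ 2 ∂ℙ := by
    rw [hA]
    have h1 : Integrable (fun ω => f x - η * ⟪G, g ω⟫) ℙ :=
      (integrable_const (f x)).sub (hin.const_mul η)
    rw [integral_add h1 (hsq.const_mul _),
      integral_sub (integrable_const (f x)) (hin.const_mul η),
      integral_const_mul, integral_const_mul, integral_inner hgint, hmean]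
    simp
  -- algebraic finish
  have hGc : ⟪G, c⟫ = ‖G‖ ^ 2 + ⟪G, b⟫ := by
    rw [hc, inner_add_right, real_inner_self_eq_norm_sq]
  have hcsq : ‖c‖ ^ 2 = ‖G‖ ^ 2 + 2 * ⟪G, b⟫ + ‖b‖ ^ 2 := by
    rw [hc, norm_add_sq_real]
  have hPLx := hPL x
  have hstep : η ^ 2 * L₂ / 2 * ((M + 1) * ‖c‖ ^ 2) ≤ η / 2 * ‖c‖ ^ 2 := by
    have key := mul_le_mul_of_nonneg_left hη1 (mul_nonneg hη0.le (sq_nonneg ‖c‖))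
    nlinarith [key]
  have hEg2' : η ^ 2 * L₂ / 2 * ∫ ω, ‖g ω‖ ^ 2 ∂ℙ ≤
      η ^ 2 * L₂ / 2 * ((M + 1) * ‖c‖ ^ 2 + σ2) := by
    apply mul_le_mul_of_nonneg_left hEg2 (by positivity)
  have hfl := hflow x
  have hGc' : η * ⟪G, c⟫ = η * ‖G‖ ^ 2 + η * ⟪G, b⟫ := by rw [hGc]; ring
  have hcsq' : η / 2 * ‖c‖ ^ 2 = η / 2 * ‖G‖ ^ 2 + η * ⟪G, b⟫ + η / 2 * ‖b‖ ^ 2 := by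
    rw [hcsq]; ring
  have hb' : η / 2 * ‖b‖ ^ 2 ≤ η / 2 * (m * ‖G‖ ^ 2 + ζ2) :=
    mul_le_mul_of_nonneg_left hbias (by positivity)
  have hpl' : η * (1 - m) / 2 * (2 * μ * (f x - fstar)) ≤ η * (1 - m) / 2 * ‖G‖ ^ 2 :=
    mul_le_mul_of_nonneg_left hPLx (by nlinarith : (0:ℝ) ≤ η * (1 - m) / 2)
  have hfin : (∫ ω, f (x - η • g ω) ∂ℙ) ≤
      f x - η / 2 * ‖G‖ ^ 2 + η / 2 * ‖b‖ ^ 2 + η ^ 2 * L₂ * σ2 / 2 := by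
    have e1 : η ^ 2 * L₂ / 2 * ((M + 1) * ‖c‖ ^ 2 + σ2) =
        η ^ 2 * L₂ / 2 * ((M + 1) * ‖c‖ ^ 2) + η ^ 2 * L₂ * σ2 / 2 := by ring
    linarith [hIA, hIAval.le, hIAval.ge, hEg2', hstep, hGc'.le, hGc'.ge, hcsq'.le, hcsq'.ge,
      e1.le, e1.ge]
  nlinarith [hfin, hb', hpl']
end

section
/- Let d ≥ 1, let e be a random vector uniformly distributed on the Euclidean unit sphere {y ∈ ℝ^d : ‖y‖₂ = 1}, let r be a random scalar uniformly distributed on [−1,1] independent of e, and let K : [−1,1] → ℝ be a measurable function with E[|K(r)|] < ∞ and E[r K(r)] = 1. Then for every vector s ∈ ℝ^d, E[d · r K(r) ⟨s, e⟩ e] = s. -/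
open MeasureTheory ProbabilityTheory
open scoped ENNReal RealInnerProductSpace

noncomputable def signedPerm {d : ℕ} (σ : Fin d → ℝ) (hσ : ∀ i, σ i * σ i = 1)
    (π : Equiv.Perm (Fin d)) :
    EuclideanSpace ℝ (Fin d) ≃ₗᵢ[ℝ] EuclideanSpace ℝ (Fin d) :=
  { toFun := fun x => WithLp.toLp 2 (fun i => σ i * x (π i))
    invFun := fun x => WithLp.toLp 2 (fun i => σ (π.symm i) * x (π.symm i))
    left_inv := by
      intro x; ext i
      show σ (π.symm i) * (σ (π.symm i) * x (π (π.symm i))) = x i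
      rw [← mul_assoc, hσ, one_mul, Equiv.apply_symm_apply]
    right_inv := by
      intro x; ext i
      show σ i * (σ (π.symm (π i)) * x (π.symm (π i))) = x i
      simp only [Equiv.symm_apply_apply]
      rw [← mul_assoc, hσ, one_mul]
    map_add' := by intro x y; ext i; simp only [PiLp.add_apply, PiLp.toLp_apply]; ring
    map_smul' := by intro c x; ext i; simp only [PiLp.smul_apply, PiLp.toLp_apply, smul_eq_mul,
      RingHom.id_apply]; ring
    norm_map' := by
      intro x
      rw [EuclideanSpace.norm_eq, EuclideanSpace.norm_eq]
      congr 1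
      rw [← Equiv.sum_comp π (fun i => ‖x i‖ ^ 2)]
      refine Finset.sum_congr rfl fun i _ => ?_
      show ‖σ i * x (π i)‖ ^ 2 = ‖x (π i)‖ ^ 2
      rw [norm_mul, mul_pow]
      have h1 : ‖σ i‖ ^ 2 = 1 := by rw [Real.norm_eq_abs, sq_abs, sq, hσ]
      rw [h1, one_mul] }


/-- The unbiasedness identity for the kernel-based estimator: if `e` is uniform
on the Euclidean unit sphere, `r` is uniform on `[-1,1]` independent of `e`, and the kernel `K`
satisfies `E[|K(r)|] < ∞` and `E[r K(r)] = 1`, then `E[d · r K(r) ⟨s, e⟩ e] = s`. -/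
theorem kernel_estimator_unbiased_linear
    {Ω : Type*} {m0 : MeasurableSpace Ω} (P : Measure Ω) [IsProbabilityMeasure P]
    {d : ℕ} (hd : 1 ≤ d)
    (e : Ω → EuclideanSpace ℝ (Fin d)) (r : Ω → ℝ) (K : ℝ → ℝ)
    (he_meas : Measurable e) (he_norm : ∀ ω, ‖e ω‖ = 1)
    (he_unif : ∀ O : EuclideanSpace ℝ (Fin d) ≃ₗᵢ[ℝ] EuclideanSpace ℝ (Fin d),
      Measure.map (fun ω => O (e ω)) P = Measure.map e P)
    (hr_meas : Measurable r)
    (hr_unif : Measure.map r P = (2⁻¹ : ℝ≥0∞) • volume.restrict (Set.Icc (-1 : ℝ) 1))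
    (hindep : IndepFun e r P)
    (hK_meas : Measurable K)
    (hK_int : Integrable (fun ω => |K (r ω)|) P)
    (hK1 : ∫ ω, r ω * K (r ω) ∂P = 1)
    (s : EuclideanSpace ℝ (Fin d)) :
    ∫ ω, ((d : ℝ) * (r ω * K (r ω)) * ⟪s, e ω⟫) • e ω ∂P = s := by
  classical
  -- measurability of coordinate projections
  have hproj : ∀ i : Fin d, Measurable (fun x : EuclideanSpace ℝ (Fin d) => x i) :=
    fun i => (EuclideanSpace.proj (𝕜 := ℝ) i).continuous.measurable
  -- coordinate bound
  have hbound : ∀ (x : EuclideanSpace ℝ (Fin d)) (i : Fin d), |x i| ≤ ‖x‖ := by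
    intro x i
    have h1 : ⟪EuclideanSpace.single i (1:ℝ), x⟫ = x i := by
      rw [EuclideanSpace.inner_single_left]; simp
    have h2 := abs_real_inner_le_norm (EuclideanSpace.single i (1:ℝ)) x
    rwa [h1, EuclideanSpace.norm_single, norm_one, one_mul] at h2
  -- integrability of coordinate products
  have hInt : ∀ i j : Fin d, Integrable (fun ω => e ω i * e ω j) P := by
    intro i j
    refine Integrable.mono' (integrable_const 1)
      (((hproj i).comp he_meas).mul ((hproj j).comp he_meas)).aestronglyMeasurable
      (Filter.Eventually.of_forall fun ω => ?_)
    rw [Real.norm_eq_abs, abs_mul]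
    calc |e ω i| * |e ω j| ≤ ‖e ω‖ * ‖e ω‖ :=
          mul_le_mul (hbound _ _) (hbound _ _) (abs_nonneg _) (norm_nonneg _)
      _ = 1 := by rw [he_norm, mul_one]
  -- the second moments
  set c : Fin d → Fin d → ℝ := fun i j => ∫ ω, e ω i * e ω j ∂P with hc
  -- invariance of second moments
  have hinv : ∀ (O : EuclideanSpace ℝ (Fin d) ≃ₗᵢ[ℝ] EuclideanSpace ℝ (Fin d)) (i j : Fin d),
      ∫ ω, (O (e ω)) i * (O (e ω)) j ∂P = c i j := by
    intro O i j
    have hm : Measurable (fun x : EuclideanSpace ℝ (Fin d) => x i * x j) :=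
      (hproj i).mul (hproj j)
    have hOe : Measurable (fun ω => O (e ω)) := O.continuous.measurable.comp he_meas
    calc ∫ ω, (O (e ω)) i * (O (e ω)) j ∂P
        = ∫ x, x i * x j ∂(Measure.map (fun ω => O (e ω)) P) :=
          (integral_map hOe.aemeasurable hm.aestronglyMeasurable).symm
      _ = ∫ x, x i * x j ∂(Measure.map e P) := by rw [he_unif O]
      _ = c i j := integral_map he_meas.aemeasurable hm.aestronglyMeasurable
  -- off-diagonal vanishing
  have hoff : ∀ i j : Fin d, j ≠ i → c j i = 0 := by
    intro i j hij
    set σ : Fin d → ℝ := fun k => if k = i then (-1:ℝ) else 1 with hσdef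
    have hσ : ∀ k, σ k * σ k = 1 := by
      intro k; by_cases h : k = i <;> simp [hσdef, h]
    set O := signedPerm σ hσ (1 : Equiv.Perm (Fin d)) with hO
    have key : ∀ x : EuclideanSpace ℝ (Fin d), (O x) j * (O x) i = -(x j * x i) := by
      intro x
      show (σ j * x j) * (σ i * x i) = -(x j * x i)
      simp [hσdef, hij]
    have h1 := hinv O j i
    simp only [key] at h1
    rw [integral_neg] at h1
    have h2 : -(c j i) = c j i := h1
    linarith
  -- diagonal entries are equal
  have hdiag : ∀ i j : Fin d, c i i = c j j := by
    intro i j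
    set O := signedPerm (fun _ => (1:ℝ)) (fun _ => one_mul 1) (Equiv.swap i j) with hO
    have key : ∀ x : EuclideanSpace ℝ (Fin d), (O x) i * (O x) i = x j * x j := by
      intro x
      show (1 * x (Equiv.swap i j i)) * (1 * x (Equiv.swap i j i)) = x j * x j
      rw [Equiv.swap_apply_left, one_mul]
    have h1 := hinv O i i
    simp only [key] at h1
    exact h1.symm
  -- sum of diagonal entries is 1
  have hsum : ∑ i : Fin d, c i i = 1 := by
    rw [hc]
    rw [← integral_finset_sum _ (fun i _ => hInt i i)]
    have hone : ∀ ω, ∑ i : Fin d, e ω i * e ω i = 1 := by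
      intro ω
      have h1 : ⟪e ω, e ω⟫ = 1 := by
        rw [real_inner_self_eq_norm_sq, he_norm]; norm_num
      rw [← h1, PiLp.inner_apply]
      simp [RCLike.inner_apply, sq]
    simp only [hone]
    simp
  have hdpos : (0:ℝ) < d := by exact_mod_cast Nat.lt_of_lt_of_le Nat.zero_lt_one hd
  have hcii : ∀ i : Fin d, c i i = 1 / d := by
    intro i
    have h1 : ∑ j : Fin d, c j j = d * c i i := by
      rw [Finset.sum_congr rfl fun j _ => hdiag j i]
      simp [Finset.sum_const, Finset.card_univ, nsmul_eq_mul]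
    rw [eq_div_iff hdpos.ne']
    rw [h1] at hsum; linarith
  -- a.e. bound on r
  have hr1 : ∀ᵐ ω ∂P, |r ω| ≤ 1 := by
    have hS : MeasurableSet {x : ℝ | 1 < |x|} :=
      measurableSet_lt measurable_const measurable_id.abs
    have hempty : {x : ℝ | 1 < |x|} ∩ Set.Icc (-1:ℝ) 1 = ∅ := by
      rw [Set.eq_empty_iff_forall_notMem]
      rintro x ⟨h1, h2⟩
      exact absurd (abs_le.mpr ⟨h2.1, h2.2⟩) (not_le.mpr h1)
    rw [ae_iff]
    have hset : {ω | ¬ |r ω| ≤ 1} = r ⁻¹' {x : ℝ | 1 < |x|} := by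
      ext ω; simp [not_le]
    rw [hset, ← Measure.map_apply hr_meas hS, hr_unif, Measure.smul_apply,
      Measure.restrict_apply hS, hempty]
    simp
  -- measurability of pieces
  have hrK_meas : Measurable (fun ω => r ω * K (r ω)) := hr_meas.mul (hK_meas.comp hr_meas)
  have hinner_meas : Measurable (fun ω => ⟪s, e ω⟫) :=
    (innerSL ℝ s).continuous.measurable.comp he_meas
  -- integrability of the scalar factor
  have hX_int : Integrable (fun ω => (d:ℝ) * (r ω * K (r ω))) P := by
    refine Integrable.mono' (hK_int.const_mul d) (hrK_meas.const_mul _).aestronglyMeasurable ?_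
    filter_upwards [hr1] with ω hω
    rw [Real.norm_eq_abs, abs_mul, abs_mul, abs_of_nonneg (Nat.cast_nonneg (α := ℝ) d)]
    exact mul_le_mul_of_nonneg_left (mul_le_of_le_one_left (abs_nonneg _) hω)
      (Nat.cast_nonneg d)
  have hY_int : ∀ i, Integrable (fun ω => ⟪s, e ω⟫ * e ω i) P := by
    intro i
    refine Integrable.mono' (integrable_const ‖s‖)
      (hinner_meas.mul ((hproj i).comp he_meas)).aestronglyMeasurable
      (Filter.Eventually.of_forall fun ω => ?_)
    rw [Real.norm_eq_abs, abs_mul]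
    have h1 : |⟪s, e ω⟫| ≤ ‖s‖ := by
      have := abs_real_inner_le_norm s (e ω); rwa [he_norm, mul_one] at this
    have h2 : |e ω i| ≤ 1 := by
      have := hbound (e ω) i; rwa [he_norm] at this
    calc |⟪s, e ω⟫| * |e ω i| ≤ ‖s‖ * 1 :=
          mul_le_mul h1 h2 (abs_nonneg _) (norm_nonneg _)
      _ = ‖s‖ := mul_one _
  -- independence of the two factors
  have hXY : ∀ i, IndepFun (fun ω => ⟪s, e ω⟫ * e ω i)
      (fun ω => (d:ℝ) * (r ω * K (r ω))) P := by
    intro i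
    exact hindep.comp (((innerSL ℝ s).continuous.measurable).mul (hproj i))
      ((measurable_id.mul hK_meas).const_mul _)
  -- the coordinatewise identity
  have hco : ∀ i, ∫ ω, ((d:ℝ) * (r ω * K (r ω)) * ⟪s, e ω⟫) * e ω i ∂P = s i := by
    intro i
    have h1 : (fun ω => ((d:ℝ) * (r ω * K (r ω)) * ⟪s, e ω⟫) * e ω i)
        = (fun ω => ⟪s, e ω⟫ * e ω i) * (fun ω => (d:ℝ) * (r ω * K (r ω))) := by
      funext ω; simp only [Pi.mul_apply]; ring
    rw [h1, (hXY i).integral_mul_eq_mul_integral (hY_int i).aestronglyMeasurable hX_int.aestronglyMeasurable]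
    have hXval : ∫ ω, (d:ℝ) * (r ω * K (r ω)) ∂P = d := by
      rw [integral_const_mul, hK1, mul_one]
    have hYval : ∫ ω, ⟪s, e ω⟫ * e ω i ∂P = s i * (1/d) := by
      have hexp : ∀ ω, ⟪s, e ω⟫ * e ω i = ∑ j : Fin d, s j * (e ω j * e ω i) := by
        intro ω
        rw [PiLp.inner_apply]
        simp only [RCLike.inner_apply, conj_trivial]
        rw [Finset.sum_mul]
        exact Finset.sum_congr rfl fun j _ => by ring
      simp only [hexp]
      rw [integral_finset_sum _ (fun j _ => (hInt j i).const_mul (s j))]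
      have hterm : ∀ j, ∫ ω, s j * (e ω j * e ω i) ∂P = s j * c j i :=
        fun j => integral_const_mul _ _
      simp only [hterm]
      rw [Finset.sum_eq_single i]
      · rw [hcii i]
      · intro j _ hj; rw [hoff i j hj, mul_zero]
      · intro h; exact absurd (Finset.mem_univ i) h
    rw [hXval, hYval]
    field_simp
  -- integrability of the full vector integrand
  have hIntF : Integrable (fun ω => ((d : ℝ) * (r ω * K (r ω)) * ⟪s, e ω⟫) • e ω) P := by
    refine Integrable.mono' (hK_int.const_mul (d * ‖s‖))
      (((hrK_meas.const_mul _).mul hinner_meas).smul he_meas).aestronglyMeasurable ?_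
    filter_upwards [hr1] with ω hω
    rw [norm_smul, he_norm, mul_one, Real.norm_eq_abs, abs_mul, abs_mul, abs_mul,
      abs_of_nonneg (Nat.cast_nonneg (α := ℝ) d)]
    have h1 : |⟪s, e ω⟫| ≤ ‖s‖ := by
      have := abs_real_inner_le_norm s (e ω); rwa [he_norm, mul_one] at this
    have step1 : |r ω| * |K (r ω)| ≤ |K (r ω)| := mul_le_of_le_one_left (abs_nonneg _) hω
    have step2 : |r ω| * |K (r ω)| * |(⟪s, e ω⟫ : ℝ)| ≤ |K (r ω)| * ‖s‖ :=
      mul_le_mul step1 h1 (abs_nonneg _) (abs_nonneg _)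
    have h3 := mul_le_mul_of_nonneg_left step2 (show (0:ℝ) ≤ (d:ℝ) from Nat.cast_nonneg d)
    nlinarith [h3]
  -- assemble the coordinates
  ext i
  have hfinal := (EuclideanSpace.proj (𝕜 := ℝ) i).integral_comp_comm hIntF
  have hpt : ∀ ω, (EuclideanSpace.proj (𝕜 := ℝ) i)
      (((d : ℝ) * (r ω * K (r ω)) * ⟪s, e ω⟫) • e ω)
      = ((d:ℝ) * (r ω * K (r ω)) * ⟪s, e ω⟫) * e ω i := fun ω => rfl
  simp only [hpt] at hfinal
  rw [hco i] at hfinal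
  exact hfinal.symm
end

section
/- Let f : ℝ^d → ℝ be differentiable with L₂-Lipschitz gradient, let γ > 0, and let e be a random vector uniformly distributed on the Euclidean unit sphere in ℝ^d. Then for every x ∈ ℝ^d and every r ∈ [−1,1]: (d²/(2γ²)) · E_e[(f(x + γ r e) − f(x − γ r e))²] ≤ 6 d ‖∇f(x)‖₂² + (3/4) d² L₂² γ². -/
open MeasureTheory ProbabilityTheory
open scoped ENNReal RealInnerProductSpace


lemma smooth_descent_bound {d : ℕ} (f : EuclideanSpace ℝ (Fin d) → ℝ) (L : ℝ)
    (hf : Differentiable ℝ f)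
    (hlip : ∀ x y : EuclideanSpace ℝ (Fin d), ‖gradient f x - gradient f y‖ ≤ L * ‖x - y‖)
    (x h : EuclideanSpace ℝ (Fin d)) :
    |f (x + h) - f x - ⟪gradient f x, h⟫| ≤ L / 2 * ‖h‖ ^ 2 := by
  have key : ∀ t : ℝ, HasDerivAt (fun t : ℝ => f (x + t • h))
      ⟪gradient f (x + t • h), h⟫ t := by
    intro t
    have h1 : HasDerivAt (fun t : ℝ => x + t • h) h t := by
      simpa using ((hasDerivAt_id t).smul_const h).const_add x
    have h2 : HasFDerivAt f ((InnerProductSpace.toDual ℝ _) (gradient f (x + t • h))) (x + t • h) := by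
      have := (hf (x + t • h)).hasGradientAt
      rwa [hasGradientAt_iff_hasFDerivAt] at this
    simpa [Function.comp_def] using h2.comp_hasDerivAt t h1
  set g := gradient f x with hg
  have hbound : ∀ t ∈ Set.Icc (0:ℝ) 1, |⟪gradient f (x + t • h), h⟫ - ⟪g, h⟫| ≤ L * ‖h‖^2 * t := by
    intro t ht
    have h3 : ‖gradient f (x + t • h) - g‖ ≤ L * (t * ‖h‖) := by
      have := hlip (x + t • h) x
      simpa [norm_smul, abs_of_nonneg ht.1] using this
    calc |⟪gradient f (x + t • h), h⟫ - ⟪g, h⟫|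
        = |⟪gradient f (x + t • h) - g, h⟫| := by rw [inner_sub_left]
      _ ≤ ‖gradient f (x + t • h) - g‖ * ‖h‖ := abs_real_inner_le_norm _ _
      _ ≤ L * (t * ‖h‖) * ‖h‖ := mul_le_mul_of_nonneg_right h3 (norm_nonneg h)
      _ = L * ‖h‖^2 * t := by ring
  have upper : f (x + h) - f x - ⟪g, h⟫ ≤ L / 2 * ‖h‖^2 := by
    set φ : ℝ → ℝ := fun t => f (x + t • h) - t * ⟪g, h⟫ - L/2 * ‖h‖^2 * t^2 with hφ
    have hder : ∀ t : ℝ, HasDerivAt φ (⟪gradient f (x + t • h), h⟫ - ⟪g, h⟫ - L*‖h‖^2*t) t := by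
      intro t
      have := ((key t).sub (hasDerivAt_mul_const ⟪g, h⟫)).sub
        ((hasDerivAt_pow 2 t).const_mul (L/2*‖h‖^2))
      exact this.congr_deriv (by norm_num; ring)
    have hanti : AntitoneOn φ (Set.Icc 0 1) := by
      apply antitoneOn_of_deriv_nonpos (convex_Icc 0 1)
      · exact fun t _ => (hder t).continuousAt.continuousWithinAt
      · intro t ht
        rw [interior_Icc] at ht
        exact (hder t).differentiableAt.differentiableWithinAt
      · intro t ht
        rw [interior_Icc] at ht
        rw [(hder t).deriv]
        have h4 := abs_le.mp (hbound t ⟨ht.1.le, ht.2.le⟩)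
        linarith [h4.1, h4.2]
    have h01 := hanti (Set.left_mem_Icc.mpr zero_le_one) (Set.right_mem_Icc.mpr zero_le_one) zero_le_one
    simp only [hφ, zero_smul, one_smul, add_zero, zero_pow, mul_zero, zero_mul, sub_zero, mul_one, one_pow] at h01
    linarith
  have lower : -(L / 2 * ‖h‖^2) ≤ f (x + h) - f x - ⟪g, h⟫ := by
    set φ : ℝ → ℝ := fun t => f (x + t • h) - t * ⟪g, h⟫ + L/2 * ‖h‖^2 * t^2 with hφ
    have hder : ∀ t : ℝ, HasDerivAt φ (⟪gradient f (x + t • h), h⟫ - ⟪g, h⟫ + L*‖h‖^2*t) t := by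
      intro t
      have := ((key t).sub (hasDerivAt_mul_const ⟪g, h⟫)).add
        ((hasDerivAt_pow 2 t).const_mul (L/2*‖h‖^2))
      exact this.congr_deriv (by norm_num; ring)
    have hmono : MonotoneOn φ (Set.Icc 0 1) := by
      apply monotoneOn_of_deriv_nonneg (convex_Icc 0 1)
      · exact fun t _ => (hder t).continuousAt.continuousWithinAt
      · intro t ht
        rw [interior_Icc] at ht
        exact (hder t).differentiableAt.differentiableWithinAt
      · intro t ht
        rw [interior_Icc] at ht
        rw [(hder t).deriv]
        have h4 := abs_le.mp (hbound t ⟨ht.1.le, ht.2.le⟩)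
        linarith [h4.1, h4.2]
    have h01 := hmono (Set.left_mem_Icc.mpr zero_le_one) (Set.right_mem_Icc.mpr zero_le_one) zero_le_one
    simp only [hφ, zero_smul, one_smul, add_zero, zero_pow, mul_zero, zero_mul, sub_zero, mul_one, one_pow] at h01
    linarith
  exact abs_le.mpr ⟨lower, upper⟩


lemma exp_inner_sq {Ω : Type*} {m0 : MeasurableSpace Ω} (P : Measure Ω) [IsProbabilityMeasure P]
    {d : ℕ} (e : Ω → EuclideanSpace ℝ (Fin d)) (he_meas : Measurable e)
    (he_norm : ∀ ω, ‖e ω‖ = 1)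
    (he_unif : ∀ O : EuclideanSpace ℝ (Fin d) ≃ₗᵢ[ℝ] EuclideanSpace ℝ (Fin d),
      Measure.map (fun ω => O (e ω)) P = Measure.map e P)
    (s : EuclideanSpace ℝ (Fin d)) :
    ∫ ω, ⟪s, e ω⟫ ^ 2 ∂P = ‖s‖ ^ 2 / d := by
  -- Ω is nonempty
  have hΩ : Nonempty Ω := by
    by_contra hc
    rw [not_nonempty_iff] at hc
    have h1 : P Set.univ = 1 := measure_univ
    rw [Set.univ_eq_empty_iff.mpr hc, measure_empty] at h1
    exact zero_ne_one h1
  obtain ⟨ω₀⟩ := hΩ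
  -- d is positive
  have hd : 0 < d := by
    by_contra hc
    push_neg at hc
    interval_cases d
    have h0 := he_norm ω₀
    rw [show e ω₀ = 0 from Subsingleton.elim _ _, norm_zero] at h0
    exact zero_ne_one h0
  have hdR : (0:ℝ) < d := Nat.cast_pos.mpr hd
  -- integrability
  have hint : ∀ a : EuclideanSpace ℝ (Fin d),
      Integrable (fun ω => ⟪a, e ω⟫ ^ 2) P := by
    intro a
    have hm : AEStronglyMeasurable (fun ω => ⟪a, e ω⟫ ^ 2) P :=
      ((((innerSL ℝ a).continuous.pow 2)).measurable.comp he_meas).aestronglyMeasurable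
    refine (integrable_const (‖a‖^2)).mono' hm (Filter.Eventually.of_forall fun ω => ?_)
    rw [Real.norm_eq_abs, abs_of_nonneg (sq_nonneg _)]
    calc ⟪a, e ω⟫ ^ 2 = |⟪a, e ω⟫| ^ 2 := (sq_abs _).symm
      _ ≤ (‖a‖ * ‖e ω‖) ^ 2 :=
          pow_le_pow_left₀ (abs_nonneg _) (abs_real_inner_le_norm _ _) 2
      _ = ‖a‖ ^ 2 := by rw [he_norm ω]; ring
  -- invariance
  have hO : ∀ (O : EuclideanSpace ℝ (Fin d) ≃ₗᵢ[ℝ] EuclideanSpace ℝ (Fin d))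
      (a : EuclideanSpace ℝ (Fin d)),
      ∫ ω, ⟪a, O (e ω)⟫ ^ 2 ∂P = ∫ ω, ⟪a, e ω⟫ ^ 2 ∂P := by
    intro O a
    have hg : ∀ μ : Measure (EuclideanSpace ℝ (Fin d)),
        AEStronglyMeasurable (fun v => ⟪a, v⟫ ^ 2) μ :=
      fun μ => ((innerSL ℝ a).continuous.pow 2).aestronglyMeasurable
    calc ∫ ω, ⟪a, O (e ω)⟫ ^ 2 ∂P
        = ∫ v, ⟪a, v⟫ ^ 2 ∂(Measure.map (fun ω => O (e ω)) P) :=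
          (integral_map (O.continuous.measurable.comp he_meas).aemeasurable (hg _)).symm
      _ = ∫ v, ⟪a, v⟫ ^ 2 ∂(Measure.map e P) := by rw [he_unif O]
      _ = ∫ ω, ⟪a, e ω⟫ ^ 2 ∂P := integral_map he_meas.aemeasurable (hg _)
  -- reduce to unit vector case: get an orthonormal basis
  rcases eq_or_ne s 0 with rfl | hs
  · simp
  have hsn : ‖s‖ ≠ 0 := norm_ne_zero_iff.mpr hs
  set u : EuclideanSpace ℝ (Fin d) := ‖s‖⁻¹ • s with hu_def
  have hu : ‖u‖ = 1 := by
    rw [hu_def, norm_smul, norm_inv, norm_norm, inv_mul_cancel₀ hsn]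
  set i₀ : Fin d := ⟨0, hd⟩ with hi₀
  have hv : Orthonormal ℝ (({i₀} : Set (Fin d)).restrict (fun _ => u)) := by
    constructor
    · intro i; exact hu
    · intro i j hij
      have hi := i.2; have hj := j.2
      simp only [Set.mem_singleton_iff] at hi hj
      exact absurd (Subtype.ext (hi.trans hj.symm)) hij
  obtain ⟨B, hB⟩ := hv.exists_orthonormalBasis_extension_of_card_eq (by simp)
  have hBi : B i₀ = u := hB i₀ rfl
  -- all basis directions have the same second moment
  have hswap : ∀ i j : Fin d, ∫ ω, ⟪B i, e ω⟫ ^ 2 ∂P = ∫ ω, ⟪B j, e ω⟫ ^ 2 ∂P := by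
    intro i j
    set C := B.reindex (Equiv.swap i j) with hC
    set O : EuclideanSpace ℝ (Fin d) ≃ₗᵢ[ℝ] EuclideanSpace ℝ (Fin d) :=
      B.repr.trans C.repr.symm with hO_def
    have hOj : O (B j) = B i := by
      rw [hO_def, LinearIsometryEquiv.trans_apply, OrthonormalBasis.repr_self,
        OrthonormalBasis.repr_symm_single, hC, OrthonormalBasis.reindex_apply]
      simp
    calc ∫ ω, ⟪B i, e ω⟫ ^ 2 ∂P = ∫ ω, ⟪B i, O (e ω)⟫ ^ 2 ∂P := (hO O (B i)).symm
      _ = ∫ ω, ⟪B j, e ω⟫ ^ 2 ∂P := by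
          congr 1
          funext ω
          rw [← hOj, LinearIsometryEquiv.inner_map_map]
  -- the second moments sum to 1
  have hsum : ∑ i, ∫ ω, ⟪B i, e ω⟫ ^ 2 ∂P = 1 := by
    rw [← integral_finset_sum _ (fun i _ => hint (B i))]
    have hptw : ∀ ω, ∑ i, ⟪B i, e ω⟫ ^ 2 = 1 := by
      intro ω
      have h1 := B.sum_inner_mul_inner (e ω) (e ω)
      rw [real_inner_self_eq_norm_sq, he_norm ω, one_pow] at h1
      rw [← h1]
      refine Finset.sum_congr rfl fun i _ => ?_
      rw [real_inner_comm (e ω) (B i), sq]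
    simp only [hptw]
    simp
  have hconst : ∀ i, ∫ ω, ⟪B i, e ω⟫ ^ 2 ∂P = ∫ ω, ⟪B i₀, e ω⟫ ^ 2 ∂P :=
    fun i => hswap i i₀
  have hval : ∫ ω, ⟪B i₀, e ω⟫ ^ 2 ∂P = 1 / d := by
    have h2 : (d:ℝ) * ∫ ω, ⟪B i₀, e ω⟫ ^ 2 ∂P = 1 := by
      rw [← hsum, Finset.sum_congr rfl fun i _ => hconst i]
      simp [mul_comm]
    field_simp at h2 ⊢
    linarith
  -- conclude
  have hrw : ∀ ω, ⟪s, e ω⟫ ^ 2 = ‖s‖^2 * ⟪u, e ω⟫ ^ 2 := by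
    intro ω
    rw [hu_def, real_inner_smul_left]
    field_simp
  simp only [hrw]
  rw [integral_const_mul, ← hBi, hval]
  field_simp


open ProbabilityTheory
open scoped ENNReal

set_option maxHeartbeats 1000000 in
/-- For an `L₂`-smooth function `f`, a smoothing parameter `γ > 0`, a vector `e`
uniform on the Euclidean unit sphere, every point `x` and every `r ∈ [−1,1]`:
`(d²/(2γ²)) E_e[(f(x+γre) − f(x−γre))²] ≤ 6d‖∇f(x)‖² + (3/4)d²L₂²γ²`. -/
theorem central_difference_second_moment_bound
    {Ω : Type*} {m0 : MeasurableSpace Ω} (P : Measure Ω) [IsProbabilityMeasure P]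
    {d : ℕ} (f : EuclideanSpace ℝ (Fin d) → ℝ) (L₂ : ℝ)
    (hf : Differentiable ℝ f)
    (hlip : ∀ x y : EuclideanSpace ℝ (Fin d), ‖gradient f x - gradient f y‖ ≤ L₂ * ‖x - y‖)
    (γ : ℝ) (hγ : 0 < γ)
    (e : Ω → EuclideanSpace ℝ (Fin d))
    (he_meas : Measurable e) (he_norm : ∀ ω, ‖e ω‖ = 1)
    (he_unif : ∀ O : EuclideanSpace ℝ (Fin d) ≃ₗᵢ[ℝ] EuclideanSpace ℝ (Fin d),
      Measure.map (fun ω => O (e ω)) P = Measure.map e P)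
    (x : EuclideanSpace ℝ (Fin d)) (r : ℝ) (hr : r ∈ Set.Icc (-1 : ℝ) 1) :
    (d : ℝ) ^ 2 / (2 * γ ^ 2) *
        ∫ ω, (f (x + (γ * r) • e ω) - f (x - (γ * r) • e ω)) ^ 2 ∂P
      ≤ 6 * d * ‖gradient f x‖ ^ 2 + 3 / 4 * (d : ℝ) ^ 2 * L₂ ^ 2 * γ ^ 2 := by
  have hΩ : Nonempty Ω := by
    by_contra hc
    rw [not_nonempty_iff] at hc
    have h1 : P Set.univ = 1 := measure_univ
    rw [Set.univ_eq_empty_iff.mpr hc, measure_empty] at h1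
    exact zero_ne_one h1
  obtain ⟨ω₀⟩ := hΩ
  have hd : 0 < d := by
    by_contra hc
    push_neg at hc
    interval_cases d
    have h0 := he_norm ω₀
    rw [show e ω₀ = 0 from Subsingleton.elim _ _, norm_zero] at h0
    exact zero_ne_one h0
  have hdR : (0:ℝ) < d := Nat.cast_pos.mpr hd
  set g := gradient f x with hg
  -- pointwise bound
  have hpt : ∀ ω, (f (x + (γ * r) • e ω) - f (x - (γ * r) • e ω)) ^ 2 ≤
      12 * γ^2 * r^2 * ⟪g, e ω⟫ ^ 2 + 3/2 * L₂^2 * γ^4 * r^4 := by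
    intro ω
    set h : EuclideanSpace ℝ (Fin d) := (γ * r) • e ω with hh
    have hhn : ‖h‖^2 = γ^2 * r^2 := by
      rw [hh, norm_smul, he_norm ω, mul_one, Real.norm_eq_abs, sq_abs]
      ring
    have h1 := smooth_descent_bound f L₂ hf hlip x h
    have h2 := smooth_descent_bound f L₂ hf hlip x (-h)
    rw [show x + -h = x - h from (sub_eq_add_neg x h).symm, inner_neg_right, norm_neg,
      sub_neg_eq_add] at h2
    have hgh : ⟪g, h⟫ = γ * r * ⟪g, e ω⟫ := real_inner_smul_right g (e ω) (γ * r)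
    set D := f (x + h) - f (x - h) with hD
    have hb : |D - 2 * ⟪g, h⟫| ≤ L₂ * ‖h‖^2 := by
      have h3 : D - 2 * ⟪g, h⟫ =
          (f (x + h) - f x - ⟪g, h⟫) - (f (x - h) - f x + ⟪g, h⟫) := by ring
      rw [h3]
      calc |(f (x + h) - f x - ⟪g, h⟫) - (f (x - h) - f x + ⟪g, h⟫)|
          ≤ |f (x + h) - f x - ⟪g, h⟫| + |f (x - h) - f x + ⟪g, h⟫| := abs_sub _ _
        _ ≤ L₂ / 2 * ‖h‖^2 + L₂ / 2 * ‖h‖^2 := add_le_add h1 h2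
        _ = L₂ * ‖h‖^2 := by ring
    have hb' := abs_le.mp hb
    have habs : ∀ a b c : ℝ, -c ≤ b → b ≤ c → (a + b)^2 ≤ 3*a^2 + 3/2*c^2 := by
      intro a b c hx1 hx2
      nlinarith [sq_nonneg (2*a - b), mul_nonneg (sub_nonneg.mpr hx2) (by linarith : (0:ℝ) ≤ c + b)]
    have hkey : D^2 ≤ 3 * (2 * ⟪g, h⟫)^2 + 3/2 * (L₂ * ‖h‖^2)^2 := by
      have hDe : D^2 = (2 * ⟪g, h⟫ + (D - 2 * ⟪g, h⟫))^2 := by ring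
      rw [hDe]
      exact habs _ _ _ hb'.1 hb'.2
    calc D^2 ≤ 3 * (2 * ⟪g, h⟫)^2 + 3/2 * (L₂ * ‖h‖^2)^2 := hkey
      _ = 12 * γ^2 * r^2 * ⟪g, e ω⟫ ^ 2 + 3/2 * L₂^2 * γ^4 * r^4 := by
          rw [hgh, hhn]; ring
  -- integrability
  have hqint : Integrable (fun ω => ⟪g, e ω⟫ ^ 2) P := by
    have hm : AEStronglyMeasurable (fun ω => ⟪g, e ω⟫ ^ 2) P :=
      ((((innerSL ℝ g).continuous.pow 2)).measurable.comp he_meas).aestronglyMeasurable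
    refine (integrable_const (‖g‖^2)).mono' hm (Filter.Eventually.of_forall fun ω => ?_)
    rw [Real.norm_eq_abs, abs_of_nonneg (sq_nonneg _)]
    calc ⟪g, e ω⟫ ^ 2 = |⟪g, e ω⟫| ^ 2 := (sq_abs _).symm
      _ ≤ (‖g‖ * ‖e ω‖) ^ 2 := pow_le_pow_left₀ (abs_nonneg _) (abs_real_inner_le_norm _ _) 2
      _ = ‖g‖ ^ 2 := by rw [he_norm ω]; ring
  have hφint : Integrable (fun ω => 12 * γ^2 * r^2 * ⟪g, e ω⟫ ^ 2 + 3/2 * L₂^2 * γ^4 * r^4) P :=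
    (hqint.const_mul _).add (integrable_const _)
  have hDmeas : AEStronglyMeasurable
      (fun ω => (f (x + (γ * r) • e ω) - f (x - (γ * r) • e ω)) ^ 2) P := by
    have c1 : Continuous fun v : EuclideanSpace ℝ (Fin d) => x + (γ * r) • v :=
      continuous_const.add (continuous_const_smul _)
    have c2 : Continuous fun v : EuclideanSpace ℝ (Fin d) => x - (γ * r) • v :=
      continuous_const.sub (continuous_const_smul _)
    exact ((((hf.continuous.comp c1).sub (hf.continuous.comp c2)).pow 2).measurable.comp
      he_meas).aestronglyMeasurable
  have hDint : Integrable (fun ω => (f (x + (γ * r) • e ω) - f (x - (γ * r) • e ω)) ^ 2) P := by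
    refine hφint.mono' hDmeas (Filter.Eventually.of_forall fun ω => ?_)
    rw [Real.norm_eq_abs, abs_of_nonneg (sq_nonneg _)]
    exact hpt ω
  -- integrate the pointwise bound
  have hI : ∫ ω, (f (x + (γ * r) • e ω) - f (x - (γ * r) • e ω)) ^ 2 ∂P ≤
      12 * γ^2 * r^2 * (‖g‖^2 / d) + 3/2 * L₂^2 * γ^4 * r^4 := by
    calc ∫ ω, (f (x + (γ * r) • e ω) - f (x - (γ * r) • e ω)) ^ 2 ∂P
        ≤ ∫ ω, (12 * γ^2 * r^2 * ⟪g, e ω⟫ ^ 2 + 3/2 * L₂^2 * γ^4 * r^4) ∂P :=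
          integral_mono hDint hφint hpt
      _ = 12 * γ^2 * r^2 * (∫ ω, ⟪g, e ω⟫ ^ 2 ∂P) + 3/2 * L₂^2 * γ^4 * r^4 := by
          rw [integral_add (hqint.const_mul _) (integrable_const _), integral_const_mul,
            integral_const]
          simp
      _ = 12 * γ^2 * r^2 * (‖g‖^2 / d) + 3/2 * L₂^2 * γ^4 * r^4 := by
          rw [exp_inner_sq P e he_meas he_norm he_unif g]
  -- finish with arithmetic
  have hcoef : (0:ℝ) ≤ (d:ℝ)^2 / (2 * γ^2) := by positivity
  have hr2 : r^2 ≤ 1 := by nlinarith [hr.1, hr.2]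
  have hr4 : r^4 ≤ 1 := by nlinarith [hr2, sq_nonneg r, sq_nonneg (r^2)]
  calc (d : ℝ) ^ 2 / (2 * γ ^ 2) *
        ∫ ω, (f (x + (γ * r) • e ω) - f (x - (γ * r) • e ω)) ^ 2 ∂P
      ≤ (d : ℝ) ^ 2 / (2 * γ ^ 2) * (12 * γ^2 * r^2 * (‖g‖^2 / d) + 3/2 * L₂^2 * γ^4 * r^4) :=
        mul_le_mul_of_nonneg_left hI hcoef
    _ = 6 * d * r^2 * ‖g‖^2 + 3/4 * (d:ℝ)^2 * L₂^2 * γ^2 * r^4 := by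
        have hγ2 : γ^2 ≠ 0 := by positivity
        have hd0 : (d:ℝ) ≠ 0 := ne_of_gt hdR
        field_simp
        ring
    _ ≤ 6 * d * ‖g‖ ^ 2 + 3 / 4 * (d : ℝ) ^ 2 * L₂ ^ 2 * γ ^ 2 := by
        nlinarith [mul_nonneg (mul_nonneg (show (0:ℝ) ≤ 6 * d by positivity)
            (sub_nonneg.mpr hr2)) (sq_nonneg ‖g‖),
          mul_nonneg (show (0:ℝ) ≤ 3/4 * (d:ℝ)^2 * L₂^2 * γ^2 by positivity)
            (sub_nonneg.mpr hr4)]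
end

section
/- Let f : ℝ^d → ℝ be differentiable with L₂-Lipschitz gradient. Let δ : ℝ^d → ℝ satisfy |δ(x)| ≤ Δ for all x, set f̃ = f + δ, and define the kernel-based gradient approximation g̃(x, e, r) := d (f̃(x + γ r e) − f̃(x − γ r e)) K(r) e/(2γ). Then for every x ∈ ℝ^d, E[‖g̃(x, e, r)‖₂²] ≤ κ (6 d ‖∇f(x)‖₂² + (3/4) d² L₂² γ²) + 2 κ d² Δ²/γ². -/
open MeasureTheory ProbabilityTheory
open scoped ENNReal RealInnerProductSpace

lemma my_taylor_sym {F : Type*} [NormedAddCommGroup F] [InnerProductSpace ℝ F] [CompleteSpace F]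
    (f : F → ℝ) (L : ℝ) (hL : 0 ≤ L) (hf : Differentiable ℝ f)
    (hlip : ∀ x y, ‖gradient f x - gradient f y‖ ≤ L * ‖x - y‖) (x h : F) :
    |f (x + h) - f (x - h) - 2 * ⟪gradient f x, h⟫| ≤ L * ‖h‖ ^ 2 := by
  have hgc : Continuous (gradient f) := by
    refine (LipschitzWith.of_dist_le_mul (K := L.toNNReal) fun a b => ?_).continuous
    simpa [dist_eq_norm, Real.coe_toNNReal L hL] using hlip a b
  set D : ℝ → ℝ := fun t =>
    ⟪gradient f (x + t • h), h⟫ + ⟪gradient f (x - t • h), h⟫ - 2 * ⟪gradient f x, h⟫ with hD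
  have key : ∀ (z : F), HasFDerivAt f (InnerProductSpace.toDual ℝ F (gradient f z)) z :=
    fun z => (hf z).hasGradientAt
  have hline : ∀ t : ℝ, HasDerivAt (fun t : ℝ => x + t • h) h t := by
    intro t
    simpa using ((hasDerivAt_id t).smul_const h).const_add x
  have hline2 : ∀ t : ℝ, HasDerivAt (fun t : ℝ => x - t • h) (-h) t := by
    intro t
    simpa using ((hasDerivAt_id t).smul_const h).const_sub x
  have hψ : ∀ t : ℝ, HasDerivAt
      (fun t : ℝ => f (x + t • h) - f (x - t • h) - 2 * t * ⟪gradient f x, h⟫) (D t) t := by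
    intro t
    have h1 : HasDerivAt (fun t : ℝ => f (x + t • h)) ⟪gradient f (x + t • h), h⟫ t := by
      simpa [InnerProductSpace.toDual_apply_apply, Function.comp_def] using
        (key (x + t • h)).comp_hasDerivAt t (hline t)
    have h2 : HasDerivAt (fun t : ℝ => f (x - t • h)) (-⟪gradient f (x - t • h), h⟫) t := by
      simpa [InnerProductSpace.toDual_apply_apply, real_inner_smul_right, Function.comp_def] using
        (key (x - t • h)).comp_hasDerivAt t (hline2 t)
    have h3 : HasDerivAt (fun t : ℝ => 2 * t * ⟪gradient f x, h⟫)
        (2 * ⟪gradient f x, h⟫) t := by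
      simpa using ((hasDerivAt_id t).const_mul (2:ℝ)).mul_const ⟪gradient f x, h⟫
    have := (h1.sub h2).sub h3
    simpa [hD, sub_neg_eq_add, Pi.sub_def] using this
  have hDcont : Continuous D := by
    apply Continuous.sub
    · exact ((hgc.comp (by continuity)).inner continuous_const).add
        ((hgc.comp (by continuity)).inner continuous_const)
    · exact continuous_const
  have hFTC := intervalIntegral.integral_eq_sub_of_hasDerivAt
    (fun t _ => hψ t) (hDcont.intervalIntegrable 0 1)
  have hbound : ∀ t ∈ Set.Ioc (0:ℝ) 1, |D t| ≤ (2 * L * ‖h‖ ^ 2) * t := by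
    intro t ht
    have e1 : ⟪gradient f (x + t • h), h⟫ - ⟪gradient f x, h⟫
        = ⟪gradient f (x + t • h) - gradient f x, h⟫ := (inner_sub_left _ _ _).symm
    have e2 : ⟪gradient f (x - t • h), h⟫ - ⟪gradient f x, h⟫
        = ⟪gradient f (x - t • h) - gradient f x, h⟫ := (inner_sub_left _ _ _).symm
    have b1 : |⟪gradient f (x + t • h) - gradient f x, h⟫| ≤ (L * t * ‖h‖) * ‖h‖ := by
      refine (abs_real_inner_le_norm _ _).trans ?_
      gcongr
      have := hlip (x + t • h) x
      simpa [norm_smul, abs_of_pos ht.1, mul_assoc] using this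
    have b2 : |⟪gradient f (x - t • h) - gradient f x, h⟫| ≤ (L * t * ‖h‖) * ‖h‖ := by
      refine (abs_real_inner_le_norm _ _).trans ?_
      gcongr
      have := hlip (x - t • h) x
      simpa [norm_smul, abs_of_pos ht.1, mul_assoc] using this
    have : D t = ⟪gradient f (x + t • h) - gradient f x, h⟫
        + ⟪gradient f (x - t • h) - gradient f x, h⟫ := by
      rw [hD]; rw [← e1, ← e2]; ring
    rw [this]
    calc |_ + _| ≤ _ + _ := abs_add_le _ _
    _ ≤ (L * t * ‖h‖) * ‖h‖ + (L * t * ‖h‖) * ‖h‖ := add_le_add b1 b2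
    _ = (2 * L * ‖h‖ ^ 2) * t := by ring
  have hIb : |∫ t in (0:ℝ)..1, D t| ≤ L * ‖h‖ ^ 2 := by
    have := intervalIntegral.norm_integral_le_of_norm_le
      (g := fun t => (2 * L * ‖h‖ ^ 2) * t) (f := D) (μ := volume) (a := 0) (b := 1)
      (by norm_num) ?_ ?_
    · refine this.trans ?_
      rw [intervalIntegral.integral_const_mul, integral_id]
      ring_nf
      nlinarith [sq_nonneg ‖h‖, sq_nonneg (L*‖h‖^2)]
    · refine ae_of_all _ fun t ht => ?_
      simpa using hbound t ht
    · exact (continuous_const.mul continuous_id).intervalIntegrable 0 1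
  rw [hFTC] at hIb
  simpa using hIb


lemma my_exists_iso {F : Type*} [NormedAddCommGroup F] [InnerProductSpace ℝ F]
    [FiniteDimensional ℝ F] (u v : F) (hu : ‖u‖ = 1) (hv : ‖v‖ = 1) :
    ∃ O : F ≃ₗᵢ[ℝ] F, O u = v := by
  by_cases hw : u + v = 0
  · refine ⟨LinearIsometryEquiv.neg ℝ, ?_⟩
    simp [eq_neg_of_add_eq_zero_left hw]
  · set w := u + v with hwdef
    refine ⟨(ℝ ∙ w).reflection, ?_⟩
    rw [Submodule.reflection_apply, Submodule.starProjection_singleton]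
    have hw2 : ‖w‖ ^ 2 = 2 + 2 * ⟪u, v⟫ := by
      rw [← real_inner_self_eq_norm_sq, hwdef]
      rw [inner_add_add_self, real_inner_self_eq_norm_sq, real_inner_self_eq_norm_sq, hu, hv,
        real_inner_comm v u]
      ring
    have hwu : ⟪w, u⟫ = 1 + ⟪u, v⟫ := by
      rw [hwdef, inner_add_left, real_inner_self_eq_norm_sq, hu, real_inner_comm]
      ring
    have hne : ‖w‖ ^ 2 ≠ 0 := by
      simpa using pow_ne_zero 2 (norm_ne_zero_iff.mpr hw)
    have hne' : 2 + 2 * ⟪u, v⟫ ≠ 0 := by rw [← hw2]; exact hne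
    have hkey : (⟪w, u⟫ / (‖w‖:ℝ) ^ 2) = 1/2 := by
      rw [hwu, hw2, div_eq_iff hne']; ring
    simp only [RCLike.ofReal_real_eq_id, id_eq]
    rw [hkey]
    have h2 : (2:ℕ) • ((1/2 : ℝ) • w) = w := by
      rw [two_smul, ← add_smul]; norm_num
    rw [h2, hwdef]
    abel

lemma my_sphere_moment
    {Ω : Type*} {m0 : MeasurableSpace Ω} (P : Measure Ω) [IsProbabilityMeasure P]
    {d : ℕ} (hd : 0 < d)
    (e : Ω → EuclideanSpace ℝ (Fin d)) (he_meas : Measurable e)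
    (he_norm : ∀ ω, ‖e ω‖ = 1)
    (he_unif : ∀ O : EuclideanSpace ℝ (Fin d) ≃ₗᵢ[ℝ] EuclideanSpace ℝ (Fin d),
      Measure.map (fun ω => O (e ω)) P = Measure.map e P)
    (v : EuclideanSpace ℝ (Fin d)) :
    ∫ ω, ⟪v, e ω⟫ ^ 2 ∂P = ‖v‖ ^ 2 / d := by
  -- invariance
  have hinv : ∀ (O : EuclideanSpace ℝ (Fin d) ≃ₗᵢ[ℝ] EuclideanSpace ℝ (Fin d))
      (u : EuclideanSpace ℝ (Fin d)),
      ∫ ω, ⟪O.symm u, e ω⟫ ^ 2 ∂P = ∫ ω, ⟪u, e ω⟫ ^ 2 ∂P := by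
    intro O u
    have h1 : ∀ ω, ⟪O.symm u, e ω⟫ = ⟪u, O (e ω)⟫ := by
      intro ω
      rw [← O.inner_map_map (O.symm u) (e ω), O.apply_symm_apply]
    simp_rw [h1]
    have hOe : AEMeasurable (fun ω => O (e ω)) P :=
      (O.continuous.measurable.comp he_meas).aemeasurable
    have hg : AEStronglyMeasurable (fun y : EuclideanSpace ℝ (Fin d) => ⟪u, y⟫ ^ 2)
        (Measure.map (fun ω => O (e ω)) P) :=
      ((continuous_const.inner continuous_id).pow 2).aestronglyMeasurable
    have hg2 : AEStronglyMeasurable (fun y : EuclideanSpace ℝ (Fin d) => ⟪u, y⟫ ^ 2)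
        (Measure.map e P) :=
      ((continuous_const.inner continuous_id).pow 2).aestronglyMeasurable
    rw [← integral_map hOe hg, he_unif O, integral_map he_meas.aemeasurable hg2]
  -- all unit vectors have the same moment
  have hconst : ∀ u₁ u₂ : EuclideanSpace ℝ (Fin d), ‖u₁‖ = 1 → ‖u₂‖ = 1 →
      ∫ ω, ⟪u₁, e ω⟫ ^ 2 ∂P = ∫ ω, ⟪u₂, e ω⟫ ^ 2 ∂P := by
    intro u₁ u₂ h₁ h₂
    obtain ⟨O, hO⟩ := my_exists_iso u₁ u₂ h₁ h₂
    have : O.symm u₂ = u₁ := by rw [← hO, O.symm_apply_apply]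
    rw [← this, hinv]
  -- basis vectors
  set b : Fin d → EuclideanSpace ℝ (Fin d) := fun i => EuclideanSpace.single i 1 with hb
  have hbnorm : ∀ i, ‖b i‖ = 1 := by
    intro i; simp [hb, EuclideanSpace.norm_single]
  have hint : ∀ u : EuclideanSpace ℝ (Fin d),
      Integrable (fun ω => ⟪u, e ω⟫ ^ 2) P := by
    intro u
    refine Integrable.mono' (integrable_const (‖u‖^2)) ?_ ?_
    · exact (((continuous_const.inner continuous_id).pow 2).measurable.comp
        he_meas).aestronglyMeasurable
    · refine ae_of_all _ fun ω => ?_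
      have h1 : ‖⟪u, e ω⟫ ^ 2‖ = ⟪u, e ω⟫ ^ 2 := by
        rw [Real.norm_eq_abs]; exact abs_of_nonneg (sq_nonneg _)
      rw [h1]
      calc ⟪u, e ω⟫ ^ 2 = |⟪u, e ω⟫| ^ 2 := (sq_abs _).symm
      _ ≤ (‖u‖ * ‖e ω‖) ^ 2 :=
            pow_le_pow_left₀ (abs_nonneg _) (abs_real_inner_le_norm u (e ω)) 2
      _ = ‖u‖ ^ 2 := by rw [he_norm ω]; ring
  have hsum : ∑ i, ∫ ω, ⟪b i, e ω⟫ ^ 2 ∂P = 1 := by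
    rw [← integral_finset_sum _ (fun i _ => hint (b i))]
    have : ∀ ω, ∑ i, ⟪b i, e ω⟫ ^ 2 = 1 := by
      intro ω
      have : ∀ i, ⟪b i, e ω⟫ = e ω i := by
        intro i; simp [hb, EuclideanSpace.inner_single_left]
      simp_rw [this]
      have h2 := he_norm ω
      rw [EuclideanSpace.norm_eq] at h2
      have h3 : ∑ i, (e ω i) ^ 2 = 1 := by
        have := congrArg (fun t : ℝ => t ^ 2) h2
        simp only [one_pow] at this
        rw [Real.sq_sqrt (by positivity)] at this
        simpa [Real.norm_eq_abs, sq_abs] using this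
      exact h3
    simp_rw [this]
    simp
  set i0 : Fin d := ⟨0, hd⟩
  have hmom : ∀ i, ∫ ω, ⟪b i, e ω⟫ ^ 2 ∂P = ∫ ω, ⟪b i0, e ω⟫ ^ 2 ∂P :=
    fun i => hconst (b i) (b i0) (hbnorm i) (hbnorm i0)
  have hb0 : ∫ ω, ⟪b i0, e ω⟫ ^ 2 ∂P = 1 / d := by
    have : ∑ i : Fin d, ∫ ω, ⟪b i0, e ω⟫ ^ 2 ∂P = 1 := by
      rw [← hsum]; exact Finset.sum_congr rfl fun i _ => (hmom i).symm
    rw [Finset.sum_const, Finset.card_univ, Fintype.card_fin, nsmul_eq_mul] at this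
    have hd' : (d:ℝ) ≠ 0 := Nat.cast_ne_zero.mpr hd.ne'
    rw [eq_div_iff hd']
    linarith
  -- general vector
  by_cases hv : v = 0
  · simp [hv]
  · have hvn : ‖v‖ ≠ 0 := norm_ne_zero_iff.mpr hv
    set u : EuclideanSpace ℝ (Fin d) := ‖v‖⁻¹ • v with hu
    have hun : ‖u‖ = 1 := by
      rw [hu, norm_smul, norm_inv, norm_norm, inv_mul_cancel₀ hvn]
    have hvu : ∀ ω, ⟪v, e ω⟫ = ‖v‖ * ⟪u, e ω⟫ := by
      intro ω
      rw [hu, real_inner_smul_left]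
      field_simp
    calc ∫ ω, ⟪v, e ω⟫ ^ 2 ∂P = ∫ ω, ‖v‖ ^ 2 * ⟪u, e ω⟫ ^ 2 ∂P := by
          congr 1; funext ω; rw [hvu ω]; ring
    _ = ‖v‖ ^ 2 * ∫ ω, ⟪u, e ω⟫ ^ 2 ∂P := integral_const_mul _ _
    _ = ‖v‖ ^ 2 * (1 / d) := by rw [hconst u (b i0) hun (hbnorm i0), hb0]
    _ = ‖v‖ ^ 2 / d := by ring

set_option maxHeartbeats 2000000 in
/-- Second-moment bound for the kernel-based gradient approximation of an
`L₂`-smooth function evaluated through a zeroth-order oracle corrupted by bounded adversarial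
deterministic noise `δ` with `|δ| ≤ Δ`:
`E[‖g̃(x,e,r)‖²] ≤ κ(6d‖∇f(x)‖² + (3/4)d²L₂²γ²) + 2κd²Δ²/γ²`, where `κ = E[K(r)²]`. -/
theorem kernel_second_moment_deterministic_noise
    {Ω : Type*} {m0 : MeasurableSpace Ω} (P : Measure Ω) [IsProbabilityMeasure P]
    {d : ℕ} (f : EuclideanSpace ℝ (Fin d) → ℝ) (L₂ : ℝ)
    (hf : Differentiable ℝ f)
    (hlip : ∀ x y : EuclideanSpace ℝ (Fin d), ‖gradient f x - gradient f y‖ ≤ L₂ * ‖x - y‖)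
    (δ : EuclideanSpace ℝ (Fin d) → ℝ) (Δ : ℝ) (hδ_meas : Measurable δ)
    (hδ : ∀ x, |δ x| ≤ Δ)
    (γ : ℝ) (hγ : 0 < γ)
    (e : Ω → EuclideanSpace ℝ (Fin d)) (r : Ω → ℝ) (K : ℝ → ℝ)
    (he_meas : Measurable e) (he_norm : ∀ ω, ‖e ω‖ = 1)
    (he_unif : ∀ O : EuclideanSpace ℝ (Fin d) ≃ₗᵢ[ℝ] EuclideanSpace ℝ (Fin d),
      Measure.map (fun ω => O (e ω)) P = Measure.map e P)
    (hr_meas : Measurable r)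
    (hr_unif : Measure.map r P = (2⁻¹ : ℝ≥0∞) • volume.restrict (Set.Icc (-1 : ℝ) 1))
    (hindep : IndepFun e r P)
    (hK_meas : Measurable K)
    (hK2_int : Integrable (fun ω => (K (r ω)) ^ 2) P)
    (x : EuclideanSpace ℝ (Fin d)) :
    ∫ ω, ‖((d : ℝ) / (2 * γ) *
          ((f (x + (γ * r ω) • e ω) + δ (x + (γ * r ω) • e ω))
            - (f (x - (γ * r ω) • e ω) + δ (x - (γ * r ω) • e ω))) * K (r ω)) • e ω‖ ^ 2 ∂P
      ≤ (∫ ω, (K (r ω)) ^ 2 ∂P) *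
          (6 * d * ‖gradient f x‖ ^ 2 + 3 / 4 * (d : ℝ) ^ 2 * L₂ ^ 2 * γ ^ 2)
        + 2 * (∫ ω, (K (r ω)) ^ 2 ∂P) * (d : ℝ) ^ 2 * Δ ^ 2 / γ ^ 2 := by
  have hΩ : Nonempty Ω := by
    by_contra hΩ
    rw [not_nonempty_iff] at hΩ
    have h1 : P Set.univ = 1 := measure_univ
    rw [Set.univ_eq_empty_iff.mpr hΩ, measure_empty] at h1
    exact zero_ne_one h1
  obtain ⟨ω₀⟩ := hΩ
  have hd : 0 < d := by
    rcases Nat.eq_zero_or_pos d with hd0 | hd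
    · exfalso
      have h1 := he_norm ω₀
      rw [EuclideanSpace.norm_eq] at h1
      subst hd0
      simp at h1
    · exact hd
  have hdR : (0:ℝ) < d := by exact_mod_cast hd
  have hγ' : (γ:ℝ) ≠ 0 := ne_of_gt hγ
  set G := gradient f x with hG
  -- L₂ is nonnegative
  have hL : 0 ≤ L₂ := by
    have h1 := hlip x (x + EuclideanSpace.single (⟨0, hd⟩ : Fin d) (1:ℝ))
    have h2 : x - (x + EuclideanSpace.single (⟨0, hd⟩ : Fin d) (1:ℝ))
        = -EuclideanSpace.single (⟨0, hd⟩ : Fin d) (1:ℝ) := by abel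
    rw [h2, norm_neg, EuclideanSpace.norm_single, norm_one, mul_one] at h1
    exact le_trans (norm_nonneg _) h1
  have hΔ : 0 ≤ Δ := le_trans (abs_nonneg _) (hδ x)
  -- a.e. |r| ≤ 1
  have hr_ae : ∀ᵐ ω ∂P, |r ω| ≤ 1 := by
    rw [ae_iff]
    have hs : MeasurableSet {t : ℝ | ¬ |t| ≤ 1} :=
      (measurableSet_le (measurable_id.abs) measurable_const).compl
    have h1 : {ω | ¬ |r ω| ≤ 1} = r ⁻¹' {t : ℝ | ¬ |t| ≤ 1} := rfl
    rw [h1, ← Measure.map_apply hr_meas hs, hr_unif, Measure.smul_apply,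
      Measure.restrict_apply hs]
    have h2 : {t : ℝ | ¬ |t| ≤ 1} ∩ Set.Icc (-1:ℝ) 1 = ∅ := by
      ext t
      simp only [Set.mem_inter_iff, Set.mem_setOf_eq, Set.mem_Icc, Set.mem_empty_iff_false,
        iff_false, abs_le, not_and]
      tauto
    rw [h2]
    simp
  set c₀ : ℝ := 3/4 * (d:ℝ)^2 * L₂^2 * γ^2 + 2 * (d:ℝ)^2 * Δ^2 / γ^2 with hc₀
  set b : Ω → ℝ := fun ω => 6 * (d:ℝ)^2 * ((K (r ω))^2 * ⟪G, e ω⟫ ^ 2) + c₀ * (K (r ω))^2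
    with hb
  -- measurability of the integrand
  have hzp : Measurable (fun ω => x + (γ * r ω) • e ω) :=
    measurable_const.add ((measurable_const.mul hr_meas).smul he_meas)
  have hzm : Measurable (fun ω => x - (γ * r ω) • e ω) :=
    measurable_const.sub ((measurable_const.mul hr_meas).smul he_meas)
  have hfm : Measurable f := hf.continuous.measurable
  have hscal : Measurable (fun ω => (d : ℝ) / (2 * γ) *
      ((f (x + (γ * r ω) • e ω) + δ (x + (γ * r ω) • e ω))
        - (f (x - (γ * r ω) • e ω) + δ (x - (γ * r ω) • e ω))) * K (r ω)) := by
    exact (measurable_const.mul (((hfm.comp hzp).add (hδ_meas.comp hzp)).sub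
      ((hfm.comp hzm).add (hδ_meas.comp hzm)))).mul (hK_meas.comp hr_meas)
  have hLHSm : AEStronglyMeasurable (fun ω => ‖((d : ℝ) / (2 * γ) *
      ((f (x + (γ * r ω) • e ω) + δ (x + (γ * r ω) • e ω))
        - (f (x - (γ * r ω) • e ω) + δ (x - (γ * r ω) • e ω))) * K (r ω)) • e ω‖ ^ 2) P :=
    (((hscal.smul he_meas).norm).pow measurable_const).aestronglyMeasurable
  have hIm : Measurable (fun ω => ⟪G, e ω⟫ ^ 2) :=
    (((continuous_const.inner continuous_id).pow 2).measurable).comp he_meas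
  have hKm : Measurable (fun ω => (K (r ω))^2) :=
    ((hK_meas.comp hr_meas).pow measurable_const)
  -- integrability
  have hI2 : Integrable (fun ω => (K (r ω))^2 * ⟪G, e ω⟫ ^ 2) P := by
    refine Integrable.mono' (hK2_int.mul_const (‖G‖^2)) (hKm.mul hIm).aestronglyMeasurable
      (ae_of_all _ fun ω => ?_)
    have hin : ⟪G, e ω⟫ ^ 2 ≤ ‖G‖^2 := by
      calc ⟪G, e ω⟫ ^ 2 = |⟪G, e ω⟫| ^ 2 := (sq_abs _).symm
      _ ≤ (‖G‖ * ‖e ω‖) ^ 2 := pow_le_pow_left₀ (abs_nonneg _) (abs_real_inner_le_norm _ _) 2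
      _ = ‖G‖ ^ 2 := by rw [he_norm ω]; ring
    have h1 : ‖(K (r ω))^2 * ⟪G, e ω⟫ ^ 2‖ = (K (r ω))^2 * ⟪G, e ω⟫ ^ 2 := by
      rw [Real.norm_eq_abs]
      exact abs_of_nonneg (mul_nonneg (sq_nonneg _) (sq_nonneg _))
    rw [h1]
    exact mul_le_mul_of_nonneg_left hin (sq_nonneg _)
  have hb_int : Integrable b P := (hI2.const_mul _).add (hK2_int.const_mul c₀)
  -- pointwise bound
  have hbound : ∀ᵐ ω ∂P, ‖((d : ℝ) / (2 * γ) *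
      ((f (x + (γ * r ω) • e ω) + δ (x + (γ * r ω) • e ω))
        - (f (x - (γ * r ω) • e ω) + δ (x - (γ * r ω) • e ω))) * K (r ω)) • e ω‖ ^ 2 ≤ b ω := by
    filter_upwards [hr_ae] with ω hω
    have hρ2 : (r ω)^2 ≤ 1 := by
      rw [← sq_abs]
      exact pow_le_one₀ (abs_nonneg _) hω
    -- Taylor bound
    have htay := my_taylor_sym f L₂ hL hf hlip x ((γ * r ω) • e ω)
    rw [real_inner_smul_right] at htay
    have hh : ‖(γ * r ω) • e ω‖^2 = (γ * r ω)^2 := by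
      rw [norm_smul, he_norm, mul_one, Real.norm_eq_abs, sq_abs]
    rw [hh] at htay
    set I : ℝ := ⟪G, e ω⟫ with hI
    set k : ℝ := K (r ω) with hk
    set A : ℝ := 2 * (γ * r ω * I) with hA
    set S : ℝ := f (x + (γ * r ω) • e ω) - f (x - (γ * r ω) • e ω) - A with hS
    set Cc : ℝ := δ (x + (γ * r ω) • e ω) - δ (x - (γ * r ω) • e ω) with hC
    have htayS : |S| ≤ L₂ * γ^2 := by
      have h1 : |S| ≤ L₂ * (γ * r ω)^2 := htay
      refine h1.trans ?_
      have h2 : (γ * r ω)^2 ≤ γ^2 := by nlinarith [hρ2, sq_nonneg γ]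
      exact mul_le_mul_of_nonneg_left h2 hL
    have hCb : |Cc| ≤ 2 * Δ := by
      rw [hC]
      calc |_ - _| ≤ |δ (x + (γ * r ω) • e ω)| + |δ (x - (γ * r ω) • e ω)| := abs_sub _ _
      _ ≤ Δ + Δ := add_le_add (hδ _) (hδ _)
      _ = 2 * Δ := by ring
    have hS2 : S^2 ≤ (L₂ * γ^2)^2 := by
      have := abs_le.mp htayS
      exact sq_le_sq' this.1 this.2
    have hC2 : Cc^2 ≤ (2*Δ)^2 := by
      have := abs_le.mp hCb
      exact sq_le_sq' (by linarith) this.2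
    have hA2 : A^2 ≤ 4 * γ^2 * I^2 := by
      rw [hA]
      nlinarith [hρ2, sq_nonneg (γ * I)]
    have hQ : (A + S + Cc)^2 ≤ 24*γ^2*I^2 + 3*L₂^2*γ^4 + 8*Δ^2 := by
      nlinarith [hA2, hS2, hC2, sq_nonneg (2*A - S), sq_nonneg (3*A - Cc),
        sq_nonneg (3*S - 2*Cc)]
    -- rewrite the norm
    have hDeq : (f (x + (γ * r ω) • e ω) + δ (x + (γ * r ω) • e ω))
        - (f (x - (γ * r ω) • e ω) + δ (x - (γ * r ω) • e ω)) = A + S + Cc := by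
      rw [hS, hC]; ring
    rw [norm_smul, he_norm, mul_one, Real.norm_eq_abs, sq_abs, hDeq]
    have h1 : ((d : ℝ) / (2 * γ) * (A + S + Cc) * k)^2
        = (d:ℝ)^2/(4*γ^2) * k^2 * (A + S + Cc)^2 := by
      field_simp
      ring
    rw [h1]
    calc (d:ℝ)^2/(4*γ^2) * k^2 * (A + S + Cc)^2
        ≤ (d:ℝ)^2/(4*γ^2) * k^2 * (24*γ^2*I^2 + 3*L₂^2*γ^4 + 8*Δ^2) := by
          refine mul_le_mul_of_nonneg_left hQ ?_
          positivity
    _ = b ω := by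
          rw [hb, hc₀]
          simp only [← hI, ← hk]
          field_simp
          ring
  have hLHS_int : Integrable (fun ω => ‖((d : ℝ) / (2 * γ) *
      ((f (x + (γ * r ω) • e ω) + δ (x + (γ * r ω) • e ω))
        - (f (x - (γ * r ω) • e ω) + δ (x - (γ * r ω) • e ω))) * K (r ω)) • e ω‖ ^ 2) P := by
    refine Integrable.mono' hb_int hLHSm ?_
    filter_upwards [hbound] with ω hω
    rwa [Real.norm_eq_abs, abs_of_nonneg (by positivity)]
  have hmono := integral_mono_ae hLHS_int hb_int hbound
  refine hmono.trans (le_of_eq ?_)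
  -- compute ∫ b
  rw [hb]
  rw [integral_add (hI2.const_mul _) (hK2_int.const_mul c₀), integral_const_mul, integral_const_mul]
  have hmul : ∫ ω, (K (r ω))^2 * ⟪G, e ω⟫ ^ 2 ∂P
      = (∫ ω, (K (r ω))^2 ∂P) * ∫ ω, ⟪G, e ω⟫ ^ 2 ∂P := by
    have hφ : Measurable (fun y : EuclideanSpace ℝ (Fin d) => ⟪G, y⟫ ^ 2) :=
      ((continuous_const.inner continuous_id).pow 2).measurable
    have hψ : Measurable (fun t : ℝ => (K t)^2) := hK_meas.pow measurable_const
    have hind2 : IndepFun (fun ω => (K (r ω))^2) (fun ω => ⟪G, e ω⟫ ^ 2) P :=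
      (hindep.symm.comp hψ hφ)
    exact hind2.integral_mul_eq_mul_integral hKm.aestronglyMeasurable hIm.aestronglyMeasurable
  rw [hmul, my_sphere_moment P hd e he_meas he_norm he_unif G, hc₀]
  field_simp
  ring
end

section
/- Let β ≥ 2 with l the largest integer strictly less than β, and let f : ℝ^d → ℝ belong to the Hölder class F_β(L_β). Let ξ₁, ξ₂ be integrable real random variables independent of the pair (e, r), and define the one-point kernel-based gradient approximation g̃(x, ξ, e, r) := d (f(x + γ r e) + ξ₁ − f(x − γ r e) − ξ₂) K(r) e/(2γ). Then for every x ∈ ℝ^d, ‖E[g̃(x, ξ, e, r)] − ∇f(x)‖₂ ≤ κ_β d L_β γ^{β−1}. -/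
open MeasureTheory ProbabilityTheory
open scoped ENNReal

noncomputable def negCoordL {d : ℕ} (i : Fin d) :
    EuclideanSpace ℝ (Fin d) ≃ₗ[ℝ] EuclideanSpace ℝ (Fin d) where
  toFun y := WithLp.toLp 2 (fun k => if k = i then -(y k) else y k)
  invFun y := WithLp.toLp 2 (fun k => if k = i then -(y k) else y k)
  map_add' a b := by
    ext k; by_cases h : k = i <;> simp [h, PiLp.add_apply] <;> ring
  map_smul' t a := by
    ext k; by_cases h : k = i <;> simp [h, PiLp.smul_apply, smul_eq_mul] <;> ring
  left_inv a := by ext k; by_cases h : k = i <;> simp [h]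
  right_inv a := by ext k; by_cases h : k = i <;> simp [h]

noncomputable def negCoord {d : ℕ} (i : Fin d) :
    EuclideanSpace ℝ (Fin d) ≃ₗᵢ[ℝ] EuclideanSpace ℝ (Fin d) :=
  (negCoordL i).isometryOfInner (by
    intro a b
    simp only [PiLp.inner_apply, RCLike.inner_apply, conj_trivial]
    refine Finset.sum_congr rfl fun k _ => ?_
    show (if k = i then -(b k) else b k) * (if k = i then -(a k) else a k) = b k * a k
    by_cases h : k = i <;> simp [h])

@[simp] lemma negCoord_apply {d : ℕ} (i : Fin d) (y : EuclideanSpace ℝ (Fin d)) (k : Fin d) :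
    negCoord i y k = if k = i then -(y k) else y k := rfl

lemma integral_comp_isometry {Ω : Type*} {m0 : MeasurableSpace Ω} (P : Measure Ω) {d : ℕ}
    {e : Ω → EuclideanSpace ℝ (Fin d)} (he : Measurable e)
    (heu : ∀ O : EuclideanSpace ℝ (Fin d) ≃ₗᵢ[ℝ] EuclideanSpace ℝ (Fin d),
      Measure.map (fun ω => O (e ω)) P = Measure.map e P)
    (O : EuclideanSpace ℝ (Fin d) ≃ₗᵢ[ℝ] EuclideanSpace ℝ (Fin d))
    (g : EuclideanSpace ℝ (Fin d) → ℝ) (hg : Continuous g) :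
    ∫ ω, g (O (e ω)) ∂P = ∫ ω, g (e ω) ∂P := by
  have h1 : ∫ ω, g (O (e ω)) ∂P = ∫ y, g y ∂(Measure.map (fun ω => O (e ω)) P) :=
    (integral_map (φ := fun ω => O (e ω)) ((O.continuous.measurable.comp he).aemeasurable)
      hg.aestronglyMeasurable).symm
  have h2 : ∫ y, g y ∂(Measure.map e P) = ∫ ω, g (e ω) ∂P :=
    integral_map he.aemeasurable hg.aestronglyMeasurable
  rw [h1, heu O, h2]

lemma euclid_norm_sq {d : ℕ} (y : EuclideanSpace ℝ (Fin d)) : ‖y‖ ^ 2 = ∑ k, y k ^ 2 := by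
  rw [EuclideanSpace.norm_eq, Real.sq_sqrt (by positivity)]
  simp [Real.norm_eq_abs, sq_abs]

lemma abs_coord_le {d : ℕ} (y : EuclideanSpace ℝ (Fin d)) (i : Fin d) (hy : ‖y‖ = 1) :
    |y i| ≤ 1 := by
  have h1 : y i ^ 2 ≤ ∑ k, y k ^ 2 :=
    Finset.single_le_sum (fun k _ => sq_nonneg (y k)) (Finset.mem_univ i)
  rw [← euclid_norm_sq, hy, one_pow] at h1
  nlinarith [abs_nonneg (y i), sq_abs (y i)]

lemma sphere_moment {Ω : Type*} {m0 : MeasurableSpace Ω} (P : Measure Ω) [IsProbabilityMeasure P]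
    {d : ℕ} (hd : 0 < d)
    {e : Ω → EuclideanSpace ℝ (Fin d)} (he : Measurable e) (hn : ∀ ω, ‖e ω‖ = 1)
    (heu : ∀ O : EuclideanSpace ℝ (Fin d) ≃ₗᵢ[ℝ] EuclideanSpace ℝ (Fin d),
      Measure.map (fun ω => O (e ω)) P = Measure.map e P) (i j : Fin d) :
    ∫ ω, e ω i * e ω j ∂P = if i = j then ((d : ℝ))⁻¹ else 0 := by
  have hcont : ∀ k m : Fin d, Continuous fun y : EuclideanSpace ℝ (Fin d) => y k * y m :=
    fun k m => ((EuclideanSpace.proj k).continuous).mul ((EuclideanSpace.proj m).continuous)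
  by_cases hij : i = j
  · subst hij
    simp only [if_pos rfl, ite_true]
    -- all diagonal moments are equal
    have hswap : ∀ k : Fin d, ∫ ω, e ω k * e ω k ∂P = ∫ ω, e ω i * e ω i ∂P := by
      intro k
      have := integral_comp_isometry P he heu
        (LinearIsometryEquiv.piLpCongrLeft 2 ℝ ℝ (Equiv.swap i k))
        (fun y => y i * y i) (hcont i i)
      rw [← this]
      refine integral_congr_ae (Filter.EventuallyEq.of_eq (funext fun ω => ?_))
      show e ω k * e ω k
          = (LinearIsometryEquiv.piLpCongrLeft 2 ℝ ℝ (Equiv.swap i k)) (e ω) i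
            * (LinearIsometryEquiv.piLpCongrLeft 2 ℝ ℝ (Equiv.swap i k)) (e ω) i
      have happ : (LinearIsometryEquiv.piLpCongrLeft 2 ℝ ℝ (Equiv.swap i k)) (e ω) i
          = e ω ((Equiv.swap i k).symm i) := rfl
      rw [happ, Equiv.symm_swap, Equiv.swap_apply_left]
  -- integrability of coordinates products
    have hint : ∀ k m : Fin d, Integrable (fun ω => e ω k * e ω m) P := by
      intro k m
      refine Integrable.mono' (integrable_const (1 : ℝ)) ((hcont k m).measurable.comp he).aestronglyMeasurable
        (Filter.Eventually.of_forall fun ω => ?_)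
      rw [Real.norm_eq_abs, abs_mul]
      exact mul_le_one₀ (abs_coord_le _ _ (hn ω)) (abs_nonneg _) (abs_coord_le _ _ (hn ω))
    have hsum : ∑ k : Fin d, ∫ ω, e ω k * e ω k ∂P = 1 := by
      rw [← integral_finset_sum _ fun k _ => hint k k]
      have : ∀ ω, ∑ k : Fin d, e ω k * e ω k = 1 := by
        intro ω
        calc ∑ k : Fin d, e ω k * e ω k = ∑ k : Fin d, e ω k ^ 2 := by
              exact Finset.sum_congr rfl fun k _ => (sq (e ω k)).symm
          _ = ‖e ω‖ ^ 2 := (euclid_norm_sq (e ω)).symm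
          _ = 1 := by rw [hn ω]; norm_num
      simp only [this, integral_const, measure_univ, probReal_univ, smul_eq_mul, mul_one]
    rw [Finset.sum_congr rfl (fun k _ => hswap k)] at hsum
    rw [Finset.sum_const, Finset.card_univ, Fintype.card_fin, nsmul_eq_mul] at hsum
    exact eq_inv_of_mul_eq_one_right hsum
  · simp only [if_neg hij]
    have h := integral_comp_isometry P he heu (negCoord i) (fun y => y i * y j) (hcont i j)
    have h2 : ∫ ω, (negCoord i (e ω)) i * (negCoord i (e ω)) j ∂P
        = ∫ ω, -(e ω i * e ω j) ∂P := by
      refine integral_congr_ae (Filter.EventuallyEq.of_eq (funext fun ω => ?_))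
      rw [negCoord_apply, negCoord_apply, if_pos rfl, if_neg (fun hc => hij hc.symm)]
      ring
    rw [h2, integral_neg] at h
    linarith
lemma alg_split (c k s1 s2 rp rm : ℝ) (n : ℕ) (a b : ℕ → ℝ) :
    c * ((((∑ j ∈ Finset.range n, a j) + rp) + s1) - (((∑ j ∈ Finset.range n, b j) + rm) + s2)) * k
      = c * (s1 - s2) * k + (∑ j ∈ Finset.range n, c * (a j - b j) * k) + c * (rp - rm) * k := by
  rw [Finset.sum_congr rfl (fun j _ => (by ring : c * (a j - b j) * k = c * k * a j - c * k * b j)),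
    Finset.sum_sub_distrib, ← Finset.mul_sum, ← Finset.mul_sum]
  ring

/-- Bias bound for the one-point kernel-based gradient approximation of a
higher-order smooth (Hölder class `F_β(L_β)`) function, where the zeroth-order oracle is
corrupted by additive adversarial stochastic noises `ξ₁, ξ₂` independent of `(e, r)`:
`‖E[g̃(x,ξ,e,r)] − ∇f(x)‖ ≤ κ_β d L_β γ^{β−1}`. -/
theorem kernel_bias_stochastic_noise
    {Ω : Type*} {m0 : MeasurableSpace Ω} (P : Measure Ω) [IsProbabilityMeasure P]
    {d : ℕ} (β : ℝ) (l : ℕ) (hβ : 2 ≤ β) (hl : (l : ℝ) < β) (hl' : β ≤ (l : ℝ) + 1)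
    (f : EuclideanSpace ℝ (Fin d) → ℝ) (Lβ : ℝ)
    (hf : ContDiff ℝ (l : ℕ∞) f)
    (hHolder : ∀ x z : EuclideanSpace ℝ (Fin d),
      |f z - ∑ j ∈ Finset.range (l + 1),
          ((j.factorial : ℝ)⁻¹) * iteratedFDeriv ℝ j f x (fun _ => z - x)|
        ≤ Lβ * ‖z - x‖ ^ β)
    (γ : ℝ) (hγ : 0 < γ)
    (e : Ω → EuclideanSpace ℝ (Fin d)) (r : Ω → ℝ) (ξ₁ ξ₂ : Ω → ℝ) (K : ℝ → ℝ)
    (he_meas : Measurable e) (he_norm : ∀ ω, ‖e ω‖ = 1)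
    (he_unif : ∀ O : EuclideanSpace ℝ (Fin d) ≃ₗᵢ[ℝ] EuclideanSpace ℝ (Fin d),
      Measure.map (fun ω => O (e ω)) P = Measure.map e P)
    (hr_meas : Measurable r)
    (hr_unif : Measure.map r P = (2⁻¹ : ℝ≥0∞) • volume.restrict (Set.Icc (-1 : ℝ) 1))
    (hindep : IndepFun e r P)
    (hξ₁_meas : Measurable ξ₁) (hξ₂_meas : Measurable ξ₂)
    (hξ₁_int : Integrable ξ₁ P) (hξ₂_int : Integrable ξ₂ P)
    (hξ_indep : IndepFun (fun ω => (ξ₁ ω, ξ₂ ω)) (fun ω => (e ω, r ω)) P)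
    (hK_meas : Measurable K)
    (hK0 : ∫ ω, K (r ω) ∂P = 0)
    (hK1 : ∫ ω, r ω * K (r ω) ∂P = 1)
    (hKj : ∀ j : ℕ, 2 ≤ j → j ≤ l → ∫ ω, (r ω) ^ j * K (r ω) ∂P = 0)
    (hKβ_int : Integrable (fun ω => |r ω| ^ β * |K (r ω)|) P)
    (hK_int : Integrable (fun ω => |K (r ω)|) P)
    (x : EuclideanSpace ℝ (Fin d))
    (hg_int : Integrable (fun ω =>
      ((d : ℝ) / (2 * γ) *
          ((f (x + (γ * r ω) • e ω) + ξ₁ ω)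
            - (f (x - (γ * r ω) • e ω) + ξ₂ ω)) * K (r ω)) • e ω) P) :
    ‖(∫ ω, ((d : ℝ) / (2 * γ) *
          ((f (x + (γ * r ω) • e ω) + ξ₁ ω)
            - (f (x - (γ * r ω) • e ω) + ξ₂ ω)) * K (r ω)) • e ω ∂P)
        - gradient f x‖
      ≤ (∫ ω, |r ω| ^ β * |K (r ω)| ∂P) * d * Lβ * γ ^ (β - 1) := by
  classical
  -- basic facts
  have hΩ : Nonempty Ω := by
    by_contra h
    rw [not_nonempty_iff] at h
    have h1 : P Set.univ = 1 := measure_univ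
    rw [Set.univ_eq_empty_iff.mpr h, measure_empty] at h1
    exact zero_ne_one h1
  have hd : 0 < d := by
    rcases Nat.eq_zero_or_pos d with h0 | h
    · exfalso
      have h1 := he_norm hΩ.some
      have hz : e hΩ.some = 0 := by subst h0; exact Subsingleton.elim _ _
      rw [hz, norm_zero] at h1
      exact zero_ne_one h1
    · exact h
  have hdR : (0:ℝ) < d := by exact_mod_cast hd
  have hl1 : 1 ≤ l := by
    have : (1:ℝ) ≤ (l:ℝ) := by linarith
    exact_mod_cast this
  set c : ℝ := (d : ℝ) / (2 * γ) with hc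
  have hc0 : 0 ≤ c := by positivity
  -- a.e. bound on r
  have hr1 : ∀ᵐ ω ∂P, |r ω| ≤ 1 := by
    have hm : MeasurableSet ((Set.Icc (-1:ℝ) 1)ᶜ) := measurableSet_Icc.compl
    have h0 : P (r ⁻¹' (Set.Icc (-1:ℝ) 1)ᶜ) = 0 := by
      rw [← Measure.map_apply hr_meas hm, hr_unif]
      simp [Measure.restrict_apply hm]
    rw [ae_iff]
    refine measure_mono_null ?_ h0
    intro ω hω
    simp only [Set.mem_setOf_eq, not_le] at hω
    simp only [Set.mem_preimage, Set.mem_compl_iff, Set.mem_Icc, not_and_or, not_le]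
    rcases lt_abs.mp hω with h | h
    · right; exact h
    · left; linarith
  -- Taylor coefficients
  set A : ℕ → EuclideanSpace ℝ (Fin d) → ℝ :=
    fun j u => iteratedFDeriv ℝ j f x (fun _ => u) with hA
  have hA_cont : ∀ j, Continuous (A j) := fun j =>
    (iteratedFDeriv ℝ j f x).cont.comp (continuous_pi fun _ => continuous_id)
  have hA_bd : ∀ (j : ℕ) (ω : Ω), |A j (e ω)| ≤ ‖iteratedFDeriv ℝ j f x‖ := by
    intro j ω
    have h := (iteratedFDeriv ℝ j f x).le_opNorm (fun _ => e ω)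
    simpa [he_norm, Real.norm_eq_abs] using h
  have hA_smul : ∀ (j : ℕ) (t : ℝ) (u : EuclideanSpace ℝ (Fin d)),
      iteratedFDeriv ℝ j f x (fun _ => t • u) = t ^ j * A j u := by
    intro j t u
    have h := (iteratedFDeriv ℝ j f x).map_smul_univ (fun _ => t) (fun _ => u)
    simpa [Finset.prod_const, smul_eq_mul] using h
  -- remainders
  set Rp : Ω → ℝ := fun ω => f (x + (γ * r ω) • e ω)
    - ∑ j ∈ Finset.range (l+1), (j.factorial : ℝ)⁻¹ * ((γ * r ω) ^ j * A j (e ω)) with hRp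
  set Rm : Ω → ℝ := fun ω => f (x - (γ * r ω) • e ω)
    - ∑ j ∈ Finset.range (l+1), (j.factorial : ℝ)⁻¹ * ((-(γ * r ω)) ^ j * A j (e ω)) with hRm
  have hnorm_smul : ∀ ω, ‖(γ * r ω) • e ω‖ = γ * |r ω| := by
    intro ω
    rw [norm_smul, he_norm, mul_one, Real.norm_eq_abs, abs_mul, abs_of_pos hγ]
  have hRp_bd : ∀ ω, |Rp ω| ≤ Lβ * (γ * |r ω|) ^ β := by
    intro ω
    have h := hHolder x (x + (γ * r ω) • e ω)
    rw [add_sub_cancel_left] at h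
    rw [Finset.sum_congr rfl (fun j _ => by rw [hA_smul j (γ * r ω) (e ω)])] at h
    rw [hnorm_smul ω] at h
    exact h
  have hRm_bd : ∀ ω, |Rm ω| ≤ Lβ * (γ * |r ω|) ^ β := by
    intro ω
    have h := hHolder x (x - (γ * r ω) • e ω)
    rw [sub_sub_cancel_left, ← neg_smul] at h
    rw [Finset.sum_congr rfl (fun j _ => by rw [hA_smul j (-(γ * r ω)) (e ω)])] at h
    have hn2 : ‖(-(γ * r ω)) • e ω‖ = γ * |r ω| := by
      rw [norm_smul, he_norm, mul_one, Real.norm_eq_abs, abs_neg, abs_mul, abs_of_pos hγ]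
    rw [hn2] at h
    exact h
  have hfp : ∀ ω, f (x + (γ * r ω) • e ω)
      = (∑ j ∈ Finset.range (l+1), (j.factorial : ℝ)⁻¹ * ((γ * r ω) ^ j * A j (e ω))) + Rp ω := by
    intro ω; simp only [hRp]; ring
  have hfm : ∀ ω, f (x - (γ * r ω) • e ω)
      = (∑ j ∈ Finset.range (l+1), (j.factorial : ℝ)⁻¹ * ((-(γ * r ω)) ^ j * A j (e ω))) + Rm ω := by
    intro ω; simp only [hRm]; ring
  -- the three pieces
  set N : Ω → EuclideanSpace ℝ (Fin d) :=
    fun ω => (c * (ξ₁ ω - ξ₂ ω) * K (r ω)) • e ω with hN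
  set G : ℕ → Ω → EuclideanSpace ℝ (Fin d) := fun j ω =>
    (c * ((j.factorial : ℝ)⁻¹ * (((γ * r ω)) ^ j * A j (e ω) - (-(γ * r ω)) ^ j * A j (e ω))) * K (r ω)) • e ω with hG
  set Rem : Ω → EuclideanSpace ℝ (Fin d) :=
    fun ω => (c * (Rp ω - Rm ω) * K (r ω)) • e ω with hRem
  have hdecomp : ∀ ω, (c *
          ((f (x + (γ * r ω) • e ω) + ξ₁ ω)
            - (f (x - (γ * r ω) • e ω) + ξ₂ ω)) * K (r ω)) • e ω
      = N ω + (∑ j ∈ Finset.range (l+1), G j ω) + Rem ω := by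
    intro ω
    simp only [hN, hG, hRem]
    rw [← Finset.sum_smul, ← add_smul, ← add_smul]
    congr 1
    rw [hfp ω, hfm ω, alg_split]
    congr 2
    exact Finset.sum_congr rfl fun j _ => by ring
  -- measurability helpers
  have hKr_meas : Measurable fun ω => K (r ω) := hK_meas.comp hr_meas
  have hKr_int : Integrable (fun ω => K (r ω)) P := by
    have h := (integrable_norm_iff hKr_meas.aestronglyMeasurable).mp
      (hK_int.congr (Filter.Eventually.of_forall fun ω => (Real.norm_eq_abs _).symm))
    exact h
  have hsmul_int : ∀ s : Ω → ℝ, Measurable s → Integrable s P →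
      Integrable (fun ω => s ω • e ω) P := by
    intro s hm hi
    refine hi.abs.mono' ((hm.smul he_meas).aestronglyMeasurable)
      (Filter.Eventually.of_forall fun ω => ?_)
    rw [norm_smul, he_norm ω, mul_one, Real.norm_eq_abs]
  -- integrability of the pieces
  have hX_int : Integrable (fun ω => ξ₁ ω - ξ₂ ω) P := hξ₁_int.sub hξ₂_int
  have hXK_indep : IndepFun (fun ω => ξ₁ ω - ξ₂ ω) (fun ω => K (r ω)) P :=
    hξ_indep.comp (measurable_fst.sub measurable_snd) (hK_meas.comp measurable_snd)
  have hXK_int : Integrable (fun ω => (ξ₁ ω - ξ₂ ω) * K (r ω)) P :=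
    hXK_indep.integrable_mul hX_int hKr_int
  have hN_int : Integrable N P := by
    rw [hN]
    refine hsmul_int _ ((measurable_const.mul (hξ₁_meas.sub hξ₂_meas)).mul hKr_meas) ?_
    exact (hXK_int.const_mul c).congr (Filter.Eventually.of_forall fun ω => by ring)
  have hG_scal_meas : ∀ j : ℕ, Measurable (fun ω =>
      c * ((j.factorial : ℝ)⁻¹ * (((γ * r ω)) ^ j * A j (e ω) - (-(γ * r ω)) ^ j * A j (e ω))) * K (r ω)) := by
    intro j
    have hAe : Measurable fun ω => A j (e ω) := (hA_cont j).measurable.comp he_meas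
    have h1 : Measurable fun ω => (γ * r ω) ^ j := (measurable_const.mul hr_meas).pow_const j
    have h2 : Measurable fun ω => (-(γ * r ω)) ^ j := (measurable_const.mul hr_meas).neg.pow_const j
    exact (measurable_const.mul (measurable_const.mul ((h1.mul hAe).sub (h2.mul hAe)))).mul hKr_meas
  have hG_int : ∀ j, Integrable (G j) P := by
    intro j
    rw [hG]
    refine hsmul_int _ (hG_scal_meas j) ?_
    set Cj : ℝ := c * ((j.factorial : ℝ)⁻¹ * (2 * γ ^ j) * ‖iteratedFDeriv ℝ j f x‖) with hCj
    refine (hK_int.const_mul Cj).mono' (hG_scal_meas j).aestronglyMeasurable ?_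
    filter_upwards [hr1] with ω hω
    rw [Real.norm_eq_abs, abs_mul, abs_mul, abs_mul]
    have habs : |γ * r ω| ≤ γ := by
      rw [abs_mul, abs_of_pos hγ]
      exact mul_le_of_le_one_right hγ.le hω
    have hdiff : |(γ * r ω) ^ j * A j (e ω) - (-(γ * r ω)) ^ j * A j (e ω)|
        ≤ (2 * γ ^ j) * ‖iteratedFDeriv ℝ j f x‖ := by
      have h1 : |(γ * r ω) ^ j * A j (e ω)| ≤ γ ^ j * ‖iteratedFDeriv ℝ j f x‖ := by
        rw [abs_mul, abs_pow]
        exact mul_le_mul (pow_le_pow_left₀ (abs_nonneg _) habs j) (hA_bd j ω) (abs_nonneg _)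
          (by positivity)
      have h2 : |(-(γ * r ω)) ^ j * A j (e ω)| ≤ γ ^ j * ‖iteratedFDeriv ℝ j f x‖ := by
        rw [abs_mul, abs_pow, abs_neg]
        exact mul_le_mul (pow_le_pow_left₀ (abs_nonneg _) habs j) (hA_bd j ω) (abs_nonneg _)
          (by positivity)
      calc |(γ * r ω) ^ j * A j (e ω) - (-(γ * r ω)) ^ j * A j (e ω)|
          ≤ |(γ * r ω) ^ j * A j (e ω)| + |(-(γ * r ω)) ^ j * A j (e ω)| := by
            rw [sub_eq_add_neg]
            exact (abs_add_le _ _).trans (by rw [abs_neg])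
        _ ≤ (2 * γ ^ j) * ‖iteratedFDeriv ℝ j f x‖ := by linarith
    rw [abs_of_nonneg hc0, abs_of_nonneg (by positivity : (0:ℝ) ≤ (j.factorial : ℝ)⁻¹), hCj]
    calc c * ((j.factorial : ℝ)⁻¹ * |(γ * r ω) ^ j * A j (e ω) - (-(γ * r ω)) ^ j * A j (e ω)|) * |K (r ω)|
        ≤ c * ((j.factorial : ℝ)⁻¹ * ((2 * γ ^ j) * ‖iteratedFDeriv ℝ j f x‖)) * |K (r ω)| := by
          gcongr
      _ = c * ((j.factorial : ℝ)⁻¹ * (2 * γ ^ j) * ‖iteratedFDeriv ℝ j f x‖) * |K (r ω)| := by ring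
  have hGsum_int : Integrable (fun ω => ∑ j ∈ Finset.range (l+1), G j ω) P :=
    integrable_finset_sum _ fun j _ => hG_int j
  have hRem_int : Integrable Rem P := by
    have h := hg_int.sub (hN_int.add hGsum_int)
    refine h.congr (Filter.Eventually.of_forall fun ω => ?_)
    simp only [Pi.sub_apply, Pi.add_apply]
    rw [hdecomp ω]; abel
  -- product formulas from independence
  have hprod_er : ∀ (φ : ℝ → ℝ) (ψ : EuclideanSpace ℝ (Fin d) → ℝ), Measurable φ → Measurable ψ →
      ∫ ω, φ (r ω) * ψ (e ω) ∂P = (∫ ω, φ (r ω) ∂P) * ∫ ω, ψ (e ω) ∂P := by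
    intro φ ψ hφ hψ
    exact (hindep.symm.comp hφ hψ).integral_fun_mul_eq_mul_integral (hφ.comp hr_meas).aestronglyMeasurable
      (hψ.comp he_meas).aestronglyMeasurable
  have hprod_ξ : ∀ (φ : ℝ × ℝ → ℝ) (ψ : (EuclideanSpace ℝ (Fin d)) × ℝ → ℝ),
      Measurable φ → Measurable ψ →
      ∫ ω, φ (ξ₁ ω, ξ₂ ω) * ψ (e ω, r ω) ∂P
        = (∫ ω, φ (ξ₁ ω, ξ₂ ω) ∂P) * ∫ ω, ψ (e ω, r ω) ∂P := by
    intro φ ψ hφ hψ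
    exact (hξ_indep.comp hφ hψ).integral_fun_mul_eq_mul_integral
      (hφ.comp (hξ₁_meas.prodMk hξ₂_meas)).aestronglyMeasurable
      (hψ.comp (he_meas.prodMk hr_meas)).aestronglyMeasurable
  -- coordinates of vector integrals
  have hcoord : ∀ (F : Ω → EuclideanSpace ℝ (Fin d)), Integrable F P → ∀ i : Fin d,
      (∫ ω, F ω ∂P) i = ∫ ω, F ω i ∂P := by
    intro F hF i
    exact ((EuclideanSpace.proj (𝕜 := ℝ) i).integral_comp_comm hF).symm
  -- the noise part integrates to zero
  have hNi : ∀ i : Fin d, ∫ ω, N ω i ∂P = 0 := by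
    intro i
    have h1 : ∀ ω, N ω i = (ξ₁ ω - ξ₂ ω) * (c * K (r ω) * e ω i) := by
      intro ω
      simp only [hN, PiLp.smul_apply, smul_eq_mul]
      ring
    have h2 : ∫ ω, (ξ₁ ω - ξ₂ ω) * (c * K (r ω) * e ω i) ∂P
        = (∫ ω, ξ₁ ω - ξ₂ ω ∂P) * ∫ ω, c * K (r ω) * e ω i ∂P :=
      hprod_ξ (fun p => p.1 - p.2) (fun p => c * K p.2 * p.1 i)
        (measurable_fst.sub measurable_snd)
        ((measurable_const.mul (hK_meas.comp measurable_snd)).mul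
          ((EuclideanSpace.proj (𝕜 := ℝ) i).continuous.measurable.comp measurable_fst))
    have h3 : ∫ ω, c * K (r ω) * e ω i ∂P
        = (∫ ω, c * K (r ω) ∂P) * ∫ ω, e ω i ∂P :=
      hprod_er (fun t => c * K t) (fun y => y i) (measurable_const.mul hK_meas)
        (EuclideanSpace.proj (𝕜 := ℝ) i).continuous.measurable
    rw [integral_congr_ae (Filter.Eventually.of_forall h1), h2, h3, integral_const_mul, hK0]
    ring
  have hN0 : ∫ ω, N ω ∂P = 0 := by
    refine PiLp.ext fun i => ?_
    rw [hcoord N hN_int i, hNi i]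
    rfl
  -- Taylor term integrals
  have hGcoord : ∀ j : ℕ, Odd j → ∀ i : Fin d, ∫ ω, G j ω i ∂P
      = (2 * c * γ ^ j * (j.factorial : ℝ)⁻¹) *
        ((∫ ω, (r ω) ^ j * K (r ω) ∂P) * ∫ ω, A j (e ω) * e ω i ∂P) := by
    intro j hj i
    have h1 : ∀ ω, G j ω i = (2 * c * γ ^ j * (j.factorial : ℝ)⁻¹) *
        (((r ω) ^ j * K (r ω)) * (A j (e ω) * e ω i)) := by
      intro ω
      simp only [hG, PiLp.smul_apply, smul_eq_mul]
      rw [hj.neg_pow]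
      ring
    have h2 : ∫ ω, ((r ω) ^ j * K (r ω)) * (A j (e ω) * e ω i) ∂P
        = (∫ ω, (r ω) ^ j * K (r ω) ∂P) * ∫ ω, A j (e ω) * e ω i ∂P :=
      hprod_er (fun t => t ^ j * K t) (fun y => A j y * y i)
        ((measurable_id.pow_const j).mul hK_meas)
        ((hA_cont j).measurable.mul (EuclideanSpace.proj (𝕜 := ℝ) i).continuous.measurable)
    rw [integral_congr_ae (Filter.Eventually.of_forall h1), integral_const_mul, h2]
  -- second moments of e
  have hmm := sphere_moment P hd he_meas he_norm he_unif
  have hee_int : ∀ k i : Fin d, Integrable (fun ω => e ω k * e ω i) P := by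
    intro k i
    refine Integrable.mono' (integrable_const (1:ℝ)) ?_ (Filter.Eventually.of_forall fun ω => ?_)
    · exact (((EuclideanSpace.proj (𝕜 := ℝ) k).continuous.measurable.comp he_meas).mul
        ((EuclideanSpace.proj (𝕜 := ℝ) i).continuous.measurable.comp he_meas)).aestronglyMeasurable
    · rw [Real.norm_eq_abs, abs_mul]
      exact mul_le_one₀ (abs_coord_le _ _ (he_norm ω)) (abs_nonneg _)
        (abs_coord_le _ _ (he_norm ω))
  -- the gradient identity
  have hA1 : ∀ u : EuclideanSpace ℝ (Fin d), A 1 u = ∑ k, gradient f x k * u k := by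
    intro u
    have h1 : A 1 u = fderiv ℝ f x u := by
      simp only [hA]
      exact iteratedFDeriv_one_apply (fun _ => u)
    have h2 : (inner ℝ (gradient f x) u : ℝ) = fderiv ℝ f x u :=
      InnerProductSpace.toDual_symm_apply
    rw [h1, ← h2, PiLp.inner_apply]
    exact Finset.sum_congr rfl fun k _ => by simp only [RCLike.inner_apply, conj_trivial]; ring
  have hAei : ∀ i : Fin d, ∫ ω, A 1 (e ω) * e ω i ∂P = gradient f x i / d := by
    intro i
    calc ∫ ω, A 1 (e ω) * e ω i ∂P
        = ∫ ω, ∑ k, gradient f x k * (e ω k * e ω i) ∂P := by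
          have h1 : ∀ ω, A 1 (e ω) * e ω i = ∑ k, gradient f x k * (e ω k * e ω i) := by
            intro ω
            rw [hA1, Finset.sum_mul]
            exact Finset.sum_congr rfl fun k _ => by ring
          exact integral_congr_ae (Filter.Eventually.of_forall h1)
      _ = ∑ k, gradient f x k * ∫ ω, e ω k * e ω i ∂P := by
          rw [integral_finset_sum _ (fun k _ => (hee_int k i).const_mul _)]
          exact Finset.sum_congr rfl fun k _ => integral_const_mul _ _
      _ = gradient f x i / d := by
          rw [Finset.sum_congr rfl (fun k _ => by rw [hmm k i])]
          simp [mul_ite, Finset.sum_ite_eq', div_eq_mul_inv]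
  have hG1 : ∫ ω, G 1 ω ∂P = gradient f x := by
    refine PiLp.ext fun i => ?_
    rw [hcoord (G 1) (hG_int 1) i, hGcoord 1 odd_one i]
    simp only [pow_one, Nat.factorial_one]
    rw [hK1, hAei i, hc]
    field_simp
    ring
  have hGj0 : ∀ j ∈ Finset.range (l+1), j ≠ 1 → ∫ ω, G j ω ∂P = 0 := by
    intro j hj hne
    rcases Nat.even_or_odd j with hev | hod
    · have hz : ∀ ω, G j ω = 0 := by
        intro ω
        simp only [hG]
        rw [hev.neg_pow, sub_self, mul_zero, mul_zero, zero_mul, zero_smul]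
      rw [integral_congr_ae (Filter.Eventually.of_forall hz), integral_zero]
    · have h3 : 2 ≤ j := by
        rcases hod with ⟨m, rfl⟩
        omega
      refine PiLp.ext fun i => ?_
      rw [hcoord (G j) (hG_int j) i, hGcoord j hod i,
        hKj j h3 (Nat.lt_succ_iff.mp (Finset.mem_range.mp hj)), zero_mul, mul_zero]
      rfl
  have hGsum : ∫ ω, ∑ j ∈ Finset.range (l+1), G j ω ∂P = gradient f x := by
    rw [integral_finset_sum _ (fun j _ => hG_int j)]
    rw [Finset.sum_eq_single 1 hGj0 (fun h1 => absurd (Finset.mem_range.mpr (by omega)) h1)]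
    exact hG1
  -- putting things together
  have hsplit : (∫ ω, (c *
          ((f (x + (γ * r ω) • e ω) + ξ₁ ω)
            - (f (x - (γ * r ω) • e ω) + ξ₂ ω)) * K (r ω)) • e ω ∂P)
      = (∫ ω, N ω ∂P) + (∫ ω, ∑ j ∈ Finset.range (l+1), G j ω ∂P) + ∫ ω, Rem ω ∂P := by
    rw [integral_congr_ae (Filter.Eventually.of_forall hdecomp)]
    have h1 : Integrable (fun ω => N ω + ∑ j ∈ Finset.range (l+1), G j ω) P :=
      hN_int.add hGsum_int
    rw [integral_add h1 hRem_int, integral_add hN_int hGsum_int]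
  rw [hsplit, hN0, hGsum, zero_add, add_sub_cancel_left]
  -- final estimate on the remainder
  calc ‖∫ ω, Rem ω ∂P‖ ≤ ∫ ω, ‖Rem ω‖ ∂P := norm_integral_le_integral_norm _
    _ ≤ ∫ ω, ((d:ℝ) * Lβ * γ ^ (β - 1)) * (|r ω| ^ β * |K (r ω)|) ∂P := by
        refine integral_mono hRem_int.norm (hKβ_int.const_mul _) fun ω => ?_
        have h2 : ‖Rem ω‖ = c * |Rp ω - Rm ω| * |K (r ω)| := by
          simp only [hRem]
          rw [norm_smul, he_norm, mul_one, Real.norm_eq_abs, abs_mul, abs_mul,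
            abs_of_nonneg hc0]
        have h3 : |Rp ω - Rm ω| ≤ 2 * (Lβ * (γ * |r ω|) ^ β) := by
          have h4 := hRp_bd ω
          have h5 := hRm_bd ω
          have h6 : |Rp ω - Rm ω| ≤ |Rp ω| + |Rm ω| := by
            rw [sub_eq_add_neg]
            exact (abs_add_le _ _).trans (by rw [abs_neg])
          linarith
        have habsK : (0:ℝ) ≤ |K (r ω)| := abs_nonneg _
        have h7 : c * |Rp ω - Rm ω| * |K (r ω)|
            ≤ c * (2 * (Lβ * (γ * |r ω|) ^ β)) * |K (r ω)| := by gcongr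
        rw [h2]
        refine h7.trans (le_of_eq ?_)
        rw [Real.mul_rpow hγ.le (abs_nonneg _)]
        have hγβ : γ ^ (β - 1) * γ ^ (1:ℝ) = γ ^ β := by
          rw [← Real.rpow_add hγ]
          norm_num
        rw [Real.rpow_one] at hγβ
        rw [← hγβ, hc]
        field_simp
    _ = (∫ ω, |r ω| ^ β * |K (r ω)| ∂P) * d * Lβ * γ ^ (β - 1) := by
        rw [integral_const_mul]
        ring
end

section
/- Let β ≥ 2 with l the largest integer strictly less than β, and let f : ℝ^d → ℝ belong to the Hölder class F_β(L_β). Let δ : ℝ^d → ℝ satisfy |δ(x)| ≤ Δ for all x, let ξ₁, ξ₂ be integrable real random variables independent of the pair (e, r), and define g̃(x, ξ, e, r) := d (f(x + γ r e) + δ(x + γ r e) + ξ₁ − f(x − γ r e) − δ(x − γ r e) − ξ₂) K(r) e/(2γ). Then for every x ∈ ℝ^d, ‖E[g̃(x, ξ, e, r)] − ∇f(x)‖₂ ≤ κ_β d L_β γ^{β−1} + κ₁ d Δ/γ. -/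
set_option linter.unusedSectionVars false

open MeasureTheory ProbabilityTheory
open scoped ENNReal RealInnerProductSpace

noncomputable section KBAux

namespace KBAux

variable {d : ℕ}

lemma abs_coord_le (y : EuclideanSpace ℝ (Fin d)) (i : Fin d) : |y i| ≤ ‖y‖ := by
  rw [EuclideanSpace.norm_eq]
  rw [← Real.sqrt_sq_eq_abs]
  apply Real.sqrt_le_sqrt
  have : |y i| ^ 2 ≤ ∑ j, ‖y j‖ ^ 2 := by
    have := Finset.single_le_sum (f := fun j => ‖y j‖ ^ 2) (fun j _ => by positivity)
      (Finset.mem_univ i)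
    simpa [sq_abs] using this
  simpa [sq_abs] using this

def negCoord (i : Fin d) : EuclideanSpace ℝ (Fin d) ≃ₗᵢ[ℝ] EuclideanSpace ℝ (Fin d) :=
  LinearIsometryEquiv.piLpCongrRight 2
    (fun k => if k = i then LinearIsometryEquiv.neg ℝ else LinearIsometryEquiv.refl ℝ ℝ)

lemma negCoord_apply (i : Fin d) (y : EuclideanSpace ℝ (Fin d)) (k : Fin d) :
    negCoord i y k = if k = i then -(y k) else y k := by
  simp only [negCoord, LinearIsometryEquiv.piLpCongrRight_apply]
  by_cases h : k = i
  · subst h; simp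
  · simp [h]

def swapCoord (i k : Fin d) : EuclideanSpace ℝ (Fin d) ≃ₗᵢ[ℝ] EuclideanSpace ℝ (Fin d) :=
  LinearIsometryEquiv.piLpCongrLeft 2 ℝ ℝ (Equiv.swap i k)

lemma swapCoord_apply (i k : Fin d) (y : EuclideanSpace ℝ (Fin d)) (j : Fin d) :
    swapCoord i k y j = y (Equiv.swap i k j) := by
  simp [swapCoord, LinearIsometryEquiv.piLpCongrLeft_apply, Equiv.piCongrLeft'_apply]


section Sphere

variable {Ω : Type*} {m0 : MeasurableSpace Ω} (P : Measure Ω) [IsProbabilityMeasure P]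
  (e : Ω → EuclideanSpace ℝ (Fin d))

/-- change of variables under an isometry, for measurable `g`. -/
lemma sphere_cov (he_meas : Measurable e)
    (he_unif : ∀ O : EuclideanSpace ℝ (Fin d) ≃ₗᵢ[ℝ] EuclideanSpace ℝ (Fin d),
      Measure.map (fun ω => O (e ω)) P = Measure.map e P)
    (O : EuclideanSpace ℝ (Fin d) ≃ₗᵢ[ℝ] EuclideanSpace ℝ (Fin d))
    (g : EuclideanSpace ℝ (Fin d) → ℝ) (hg : Measurable g) :
    ∫ ω, g (O (e ω)) ∂P = ∫ ω, g (e ω) ∂P := by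
  have hOe : AEMeasurable (fun ω => O (e ω)) P :=
    (O.continuous.measurable.comp he_meas).aemeasurable
  have h1 : ∫ ω, g (O (e ω)) ∂P = ∫ y, g y ∂(Measure.map (fun ω => O (e ω)) P) :=
    (integral_map hOe (by
      rw [he_unif O]
      exact (hg.stronglyMeasurable.aestronglyMeasurable))).symm
  have h2 : ∫ y, g y ∂(Measure.map e P) = ∫ ω, g (e ω) ∂P :=
    integral_map he_meas.aemeasurable hg.stronglyMeasurable.aestronglyMeasurable
  rw [h1, he_unif O, h2]

lemma sphere_meas_coord (he_meas : Measurable e) (i : Fin d) :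
    Measurable (fun ω => e ω i) := by
  fun_prop

lemma sphere_int_coord_mul (he_meas : Measurable e) (he_norm : ∀ ω, ‖e ω‖ = 1) (i k : Fin d) :
    Integrable (fun ω => e ω i * e ω k) P := by
  refine ⟨((sphere_meas_coord e he_meas i).mul
    (sphere_meas_coord e he_meas k)).aestronglyMeasurable, ?_⟩
  apply HasFiniteIntegral.mono' (g := fun _ => (1 : ℝ))
    (hasFiniteIntegral_const 1)
  filter_upwards with ω
  have h1 : |e ω i| ≤ 1 := (he_norm ω) ▸ abs_coord_le (e ω) i
  have h2 : |e ω k| ≤ 1 := (he_norm ω) ▸ abs_coord_le (e ω) k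
  calc ‖e ω i * e ω k‖ = |e ω i| * |e ω k| := abs_mul _ _
  _ ≤ 1 * 1 := mul_le_mul h1 h2 (abs_nonneg _) zero_le_one
  _ = 1 := one_mul 1

lemma sphere_moment (he_meas : Measurable e) (he_norm : ∀ ω, ‖e ω‖ = 1)
    (he_unif : ∀ O : EuclideanSpace ℝ (Fin d) ≃ₗᵢ[ℝ] EuclideanSpace ℝ (Fin d),
      Measure.map (fun ω => O (e ω)) P = Measure.map e P) (i k : Fin d) :
    ∫ ω, e ω i * e ω k ∂P = if i = k then (d : ℝ)⁻¹ else 0 := by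
  have hmg : ∀ i k : Fin d, Measurable (fun y : EuclideanSpace ℝ (Fin d) => y i * y k) :=
    fun i k => by fun_prop
  by_cases hik : i = k
  · subst hik
    -- all variances equal
    have hvar : ∀ k : Fin d, ∫ ω, e ω k * e ω k ∂P = ∫ ω, e ω i * e ω i ∂P := by
      intro k
      have := sphere_cov P e he_meas he_unif (swapCoord i k)
        (fun y => y k * y k) (hmg k k)
      rw [← this]
      have hs : ∀ ω, e ω ((Equiv.swap i k) k) = e ω i := fun ω => by
        rw [Equiv.swap_apply_right]
      simp only [swapCoord_apply]
      simp only [hs]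
    have hsum : ∑ k : Fin d, ∫ ω, e ω k * e ω k ∂P = 1 := by
      rw [← integral_finset_sum _ (fun k _ => sphere_int_coord_mul P e he_meas he_norm k k)]
      have hone : (fun ω => ∑ k : Fin d, e ω k * e ω k) = fun _ => (1 : ℝ) := by
        funext ω
        have : ∑ k : Fin d, e ω k * e ω k = ‖e ω‖ ^ 2 := by
          rw [EuclideanSpace.norm_eq, Real.sq_sqrt (by positivity)]
          exact Finset.sum_congr rfl (fun k _ => by
            rw [Real.norm_eq_abs, sq_abs, sq])
        rw [this, he_norm ω, one_pow]
      rw [hone, integral_const]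
      simp
    have hd : (d : ℝ) ≠ 0 := by
      by_contra h
      have hd0 : d = 0 := by exact_mod_cast h
      subst hd0
      exact absurd hsum (by simp)
    have : (d : ℝ) * ∫ ω, e ω i * e ω i ∂P = 1 := by
      rw [← hsum, Finset.sum_congr rfl (fun k _ => hvar k)]
      simp [Finset.sum_const, nsmul_eq_mul]
    rw [if_pos rfl]
    field_simp at this ⊢
    linarith
  · simp only [if_neg hik]
    have := sphere_cov P e he_meas he_unif (negCoord i) (fun y => y i * y k) (hmg i k)
    rw [show (fun ω => e ω i * e ω k) = fun ω => (fun y : EuclideanSpace ℝ (Fin d) => y i * y k) (e ω) from rfl] at *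
    have heq : ∀ ω, (negCoord i (e ω)) i * (negCoord i (e ω)) k = -(e ω i * e ω k) := by
      intro ω
      rw [negCoord_apply, negCoord_apply, if_pos rfl, if_neg (Ne.symm hik)]
      ring
    simp only [heq] at this
    rw [integral_neg] at this
    linarith

lemma integral_coord (F : Ω → EuclideanSpace ℝ (Fin d)) (hF : Integrable F P) (k : Fin d) :
    (∫ ω, F ω ∂P) k = ∫ ω, F ω k ∂P := by
  have := ((EuclideanSpace.proj k : EuclideanSpace ℝ (Fin d) →L[ℝ] ℝ)).integral_comp_comm hF
  exact this.symm

lemma integrable_smul_e (he_meas : Measurable e) (he_norm : ∀ ω, ‖e ω‖ = 1)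
    {c : Ω → ℝ} (hc : Integrable c P) :
    Integrable (fun ω => c ω • e ω) P := by
  refine ⟨hc.aestronglyMeasurable.smul he_meas.aestronglyMeasurable, ?_⟩
  apply HasFiniteIntegral.mono' hc.abs.hasFiniteIntegral
  filter_upwards with ω
  rw [norm_smul, he_norm ω, mul_one]
  simp

lemma sphere_iso (he_meas : Measurable e) (he_norm : ∀ ω, ‖e ω‖ = 1)
    (he_unif : ∀ O : EuclideanSpace ℝ (Fin d) ≃ₗᵢ[ℝ] EuclideanSpace ℝ (Fin d),
      Measure.map (fun ω => O (e ω)) P = Measure.map e P) (v : EuclideanSpace ℝ (Fin d)) :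
    ∫ ω, ⟪v, e ω⟫ • e ω ∂P = (d : ℝ)⁻¹ • v := by
  have hinner_meas : Measurable (fun ω => ⟪v, e ω⟫) := by
    exact Measurable.inner measurable_const he_meas
  have hinner_int : Integrable (fun ω => ⟪v, e ω⟫) P := by
    refine ⟨hinner_meas.aestronglyMeasurable, ?_⟩
    apply HasFiniteIntegral.mono' (hasFiniteIntegral_const ‖v‖)
    filter_upwards with ω
    calc ‖⟪v, e ω⟫‖ ≤ ‖v‖ * ‖e ω‖ := norm_inner_le_norm v (e ω)
    _ = ‖v‖ := by rw [he_norm ω, mul_one]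
  have hint : Integrable (fun ω => ⟪v, e ω⟫ • e ω) P :=
    integrable_smul_e P e he_meas he_norm hinner_int
  ext k
  rw [integral_coord P _ hint k]
  have hexp : ∀ ω, (⟪v, e ω⟫ • e ω) k = ∑ i, v i * (e ω i * e ω k) := by
    intro ω
    rw [PiLp.smul_apply, smul_eq_mul, PiLp.inner_apply]
    rw [Finset.sum_mul]
    exact Finset.sum_congr rfl fun i _ => by simp [mul_assoc]; ring
  rw [integral_congr_ae (Filter.Eventually.of_forall hexp)]
  rw [integral_finset_sum _ (fun i _ =>
    (sphere_int_coord_mul P e he_meas he_norm i k).const_mul (v i))]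
  have : ∀ i : Fin d, ∫ ω, v i * (e ω i * e ω k) ∂P
      = v i * (if i = k then (d : ℝ)⁻¹ else 0) := by
    intro i
    rw [integral_const_mul, sphere_moment P e he_meas he_norm he_unif i k]
  rw [Finset.sum_congr rfl fun i _ => this i]
  rw [PiLp.smul_apply, smul_eq_mul]
  simp [Finset.sum_ite_eq, mul_comm]

lemma factor (r : Ω → ℝ) (he_meas : Measurable e) (he_norm : ∀ ω, ‖e ω‖ = 1)
    (hr_meas : Measurable r) (hindep : IndepFun e r P)
    (φ₀ : ℝ → ℝ) (hφ₀ : Measurable φ₀) (hφi : Integrable (fun ω => φ₀ (r ω)) P)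
    (ψ : EuclideanSpace ℝ (Fin d) → ℝ) (hψ : Measurable ψ) (C : ℝ)
    (hψb : ∀ y : EuclideanSpace ℝ (Fin d), ‖y‖ = 1 → |ψ y| ≤ C) :
    ∫ ω, (φ₀ (r ω) * ψ (e ω)) • e ω ∂P
      = (∫ ω, φ₀ (r ω) ∂P) • ∫ ω, ψ (e ω) • e ω ∂P := by
  have hne : Nonempty Ω := by
    by_contra h
    rw [not_nonempty_iff] at h
    have := measure_univ (μ := P)
    simp [Set.univ_eq_empty_iff.2 h] at this
  obtain ⟨ω₀⟩ := hne
  have hC : 0 ≤ C := le_trans (abs_nonneg _) (hψb (e ω₀) (he_norm ω₀))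
  have hψ_bound : ∀ ω, |ψ (e ω)| ≤ C := fun ω => hψb (e ω) (he_norm ω)
  have habs_coord : ∀ ω (k : Fin d), |e ω k| ≤ 1 :=
    fun ω k => (he_norm ω) ▸ abs_coord_le (e ω) k
  -- integrability of pieces
  have hψe_meas : ∀ k : Fin d, Measurable (fun ω => ψ (e ω) * e ω k) :=
    fun k => (hψ.comp he_meas).mul (sphere_meas_coord e he_meas k)
  have hψe_int : ∀ k : Fin d, Integrable (fun ω => ψ (e ω) * e ω k) P := by
    intro k
    refine ⟨(hψe_meas k).aestronglyMeasurable, ?_⟩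
    apply HasFiniteIntegral.mono' (hasFiniteIntegral_const C)
    filter_upwards with ω
    calc ‖ψ (e ω) * e ω k‖ = |ψ (e ω)| * |e ω k| := abs_mul _ _
    _ ≤ C * 1 := mul_le_mul (hψ_bound ω) (habs_coord ω k) (abs_nonneg _) hC
    _ = C := mul_one C
  have hc_int : Integrable (fun ω => φ₀ (r ω) * ψ (e ω)) P := by
    refine ⟨((hφ₀.comp hr_meas).mul (hψ.comp he_meas)).aestronglyMeasurable, ?_⟩
    apply HasFiniteIntegral.mono' (hφi.abs.const_mul C).hasFiniteIntegral
    filter_upwards with ω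
    calc ‖φ₀ (r ω) * ψ (e ω)‖ = |φ₀ (r ω)| * |ψ (e ω)| := abs_mul _ _
    _ ≤ |φ₀ (r ω)| * C := mul_le_mul_of_nonneg_left (hψ_bound ω) (abs_nonneg _)
    _ = C * |φ₀ (r ω)| := mul_comm _ _
  have hψvec_int : Integrable (fun ω => ψ (e ω) • e ω) P := by
    apply integrable_smul_e P e he_meas he_norm
    refine ⟨(hψ.comp he_meas).aestronglyMeasurable, ?_⟩
    apply HasFiniteIntegral.mono' (hasFiniteIntegral_const C)
    filter_upwards with ω
    exact hψ_bound ω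
  have hlhs_int : Integrable (fun ω => (φ₀ (r ω) * ψ (e ω)) • e ω) P :=
    integrable_smul_e P e he_meas he_norm hc_int
  ext k
  rw [integral_coord P _ hlhs_int k, PiLp.smul_apply, integral_coord P _ hψvec_int k,
    smul_eq_mul]
  have hindep' : IndepFun (fun ω => φ₀ (r ω)) (fun ω => ψ (e ω) * e ω k) P := by
    have : Measurable (fun y : EuclideanSpace ℝ (Fin d) => ψ y * y k) :=
      hψ.mul (by fun_prop)
    exact (hindep.symm.comp hφ₀ this)
  have := hindep'.integral_fun_mul_eq_mul_integral hφi.aestronglyMeasurable (hψe_int k).aestronglyMeasurable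
  have heq : (fun ω => ((φ₀ (r ω) * ψ (e ω)) • e ω) k)
      = fun ω => φ₀ (r ω) * (ψ (e ω) * e ω k) := by
    funext ω
    rw [PiLp.smul_apply, smul_eq_mul, mul_assoc]
  rw [heq]
  exact this

lemma r_abs_le_one (r : Ω → ℝ) (hr_meas : Measurable r)
    (hr_unif : Measure.map r P = (2⁻¹ : ℝ≥0∞) • volume.restrict (Set.Icc (-1 : ℝ) 1)) :
    ∀ᵐ ω ∂P, |r ω| ≤ 1 := by
  have hmS : MeasurableSet {t : ℝ | 1 < |t|} :=
    measurableSet_lt measurable_const continuous_abs.measurable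
  have h0 : P (r ⁻¹' {t : ℝ | 1 < |t|}) = 0 := by
    rw [← Measure.map_apply hr_meas hmS, hr_unif]
    have : ({t : ℝ | 1 < |t|} ∩ Set.Icc (-1 : ℝ) 1) = ∅ := by
      ext t
      simp only [Set.mem_inter_iff, Set.mem_setOf_eq, Set.mem_Icc, Set.mem_empty_iff_false,
        iff_false, not_and]
      intro ht h1 h2
      exact absurd (abs_le.2 ⟨h1, h2⟩) (not_le.2 ht)
    rw [Measure.smul_apply, Measure.restrict_apply hmS, this]
    simp
  rw [ae_iff]
  convert h0 using 2
  ext ω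
  simp [not_le]

end Sphere

end KBAux


set_option maxHeartbeats 2000000 in
/-- Bias bound for the one-point kernel-based gradient approximation of a
higher-order smooth (Hölder class `F_β(L_β)`) function, where the zeroth-order oracle is
corrupted both by bounded adversarial deterministic noise `δ` with `|δ| ≤ Δ` and by additive
adversarial stochastic noises `ξ₁, ξ₂` independent of `(e, r)`:
`‖E[g̃(x,ξ,e,r)] − ∇f(x)‖ ≤ κ_β d L_β γ^{β−1} + κ₁ d Δ / γ`. -/
theorem kernel_bias_mixed_noise
    {Ω : Type*} {m0 : MeasurableSpace Ω} (P : Measure Ω) [IsProbabilityMeasure P]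
    {d : ℕ} (β : ℝ) (l : ℕ) (hβ : 2 ≤ β) (hl : (l : ℝ) < β) (hl' : β ≤ (l : ℝ) + 1)
    (f : EuclideanSpace ℝ (Fin d) → ℝ) (Lβ : ℝ)
    (hf : ContDiff ℝ (l : ℕ∞) f)
    (hHolder : ∀ x z : EuclideanSpace ℝ (Fin d),
      |f z - ∑ j ∈ Finset.range (l + 1),
          ((j.factorial : ℝ)⁻¹) * iteratedFDeriv ℝ j f x (fun _ => z - x)|
        ≤ Lβ * ‖z - x‖ ^ β)
    (δ : EuclideanSpace ℝ (Fin d) → ℝ) (Δ : ℝ) (hδ_meas : Measurable δ)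
    (hδ : ∀ x, |δ x| ≤ Δ)
    (γ : ℝ) (hγ : 0 < γ)
    (e : Ω → EuclideanSpace ℝ (Fin d)) (r : Ω → ℝ) (ξ₁ ξ₂ : Ω → ℝ) (K : ℝ → ℝ)
    (he_meas : Measurable e) (he_norm : ∀ ω, ‖e ω‖ = 1)
    (he_unif : ∀ O : EuclideanSpace ℝ (Fin d) ≃ₗᵢ[ℝ] EuclideanSpace ℝ (Fin d),
      Measure.map (fun ω => O (e ω)) P = Measure.map e P)
    (hr_meas : Measurable r)
    (hr_unif : Measure.map r P = (2⁻¹ : ℝ≥0∞) • volume.restrict (Set.Icc (-1 : ℝ) 1))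
    (hindep : IndepFun e r P)
    (hξ₁_meas : Measurable ξ₁) (hξ₂_meas : Measurable ξ₂)
    (hξ₁_int : Integrable ξ₁ P) (hξ₂_int : Integrable ξ₂ P)
    (hξ_indep : IndepFun (fun ω => (ξ₁ ω, ξ₂ ω)) (fun ω => (e ω, r ω)) P)
    (hK_meas : Measurable K)
    (hK0 : ∫ ω, K (r ω) ∂P = 0)
    (hK1 : ∫ ω, r ω * K (r ω) ∂P = 1)
    (hKj : ∀ j : ℕ, 2 ≤ j → j ≤ l → ∫ ω, (r ω) ^ j * K (r ω) ∂P = 0)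
    (hKβ_int : Integrable (fun ω => |r ω| ^ β * |K (r ω)|) P)
    (hK_int : Integrable (fun ω => |K (r ω)|) P)
    (x : EuclideanSpace ℝ (Fin d))
    (hg_int : Integrable (fun ω =>
      ((d : ℝ) / (2 * γ) *
          ((f (x + (γ * r ω) • e ω) + δ (x + (γ * r ω) • e ω) + ξ₁ ω)
            - (f (x - (γ * r ω) • e ω) + δ (x - (γ * r ω) • e ω) + ξ₂ ω)) * K (r ω)) • e ω) P) :
    ‖(∫ ω, ((d : ℝ) / (2 * γ) *
          ((f (x + (γ * r ω) • e ω) + δ (x + (γ * r ω) • e ω) + ξ₁ ω)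
            - (f (x - (γ * r ω) • e ω) + δ (x - (γ * r ω) • e ω) + ξ₂ ω)) * K (r ω)) • e ω ∂P)
        - gradient f x‖
      ≤ (∫ ω, |r ω| ^ β * |K (r ω)| ∂P) * d * Lβ * γ ^ (β - 1)
        + (∫ ω, |K (r ω)| ∂P) * d * Δ / γ := by
  classical
  have hγ' : γ ≠ 0 := ne_of_gt hγ
  have hd2γ : (0:ℝ) ≤ (d : ℝ) / (2 * γ) := by positivity
  have hr1 : ∀ᵐ ω ∂P, |r ω| ≤ 1 := KBAux.r_abs_le_one P r hr_meas hr_unif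
  have hl1 : 1 ≤ l := by
    have : (1 : ℝ) ≤ (l : ℝ) := by linarith
    exact_mod_cast this
  have hne : Nonempty Ω := by
    by_contra h
    rw [not_nonempty_iff] at h
    have := measure_univ (μ := P)
    simp [Set.univ_eq_empty_iff.2 h] at this
  obtain ⟨ω₀⟩ := hne
  have hd0 : (d : ℝ) ≠ 0 := by
    intro h
    have hd' : d = 0 := by exact_mod_cast h
    have : e ω₀ = 0 := by
      subst hd'
      ext i
      exact i.elim0
    have h1 := he_norm ω₀
    rw [this, norm_zero] at h1
    norm_num at h1
  -- facts about ψ j = iteratedFDeriv applied to constant tuples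
  have hψ_meas : ∀ j : ℕ,
      Measurable (fun y : EuclideanSpace ℝ (Fin d) => iteratedFDeriv ℝ j f x (fun _ => y)) := by
    intro j
    exact (((iteratedFDeriv ℝ j f x).cont).comp (continuous_pi fun _ => continuous_id)).measurable
  have hψ_bd : ∀ (j : ℕ) (y : EuclideanSpace ℝ (Fin d)), ‖y‖ = 1 →
      |iteratedFDeriv ℝ j f x (fun _ => y)| ≤ ‖iteratedFDeriv ℝ j f x‖ := by
    intro j y hy
    have := (iteratedFDeriv ℝ j f x).le_opNorm (fun _ => y)
    rw [Real.norm_eq_abs] at this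
    simpa [hy] using this
  have hψ_smul : ∀ (j : ℕ) (c : ℝ) (y : EuclideanSpace ℝ (Fin d)),
      iteratedFDeriv ℝ j f x (fun _ => c • y) = c ^ j * iteratedFDeriv ℝ j f x (fun _ => y) := by
    intro j c y
    have := (iteratedFDeriv ℝ j f x).map_smul_univ (fun _ => c) (fun _ => y)
    simpa [Finset.prod_const, smul_eq_mul] using this
  -- Taylor remainder bounds
  have hnv : ∀ ω, ‖(γ * r ω) • e ω‖ = γ * |r ω| := by
    intro ω
    rw [norm_smul, he_norm ω, mul_one, Real.norm_eq_abs, abs_mul, abs_of_pos hγ]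
  have hpow : ∀ ω, (γ * |r ω|) ^ β = γ ^ β * |r ω| ^ β := by
    intro ω
    exact Real.mul_rpow hγ.le (abs_nonneg _)
  have hRp : ∀ ω, |f (x + (γ * r ω) • e ω) - (∑ j ∈ Finset.range (l + 1), (j.factorial : ℝ)⁻¹ * ((γ * r ω) ^ j * iteratedFDeriv ℝ j f x (fun _ => e ω)))| ≤ Lβ * (γ ^ β * |r ω| ^ β) := by
    intro ω
    have h := hHolder x (x + (γ * r ω) • e ω)
    simp only [add_sub_cancel_left] at h
    simp only [hψ_smul] at h
    rw [hnv ω, hpow ω] at h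
    exact h
  have hRm : ∀ ω, |f (x - (γ * r ω) • e ω) - (∑ j ∈ Finset.range (l + 1), (j.factorial : ℝ)⁻¹ * ((-(γ * r ω)) ^ j * iteratedFDeriv ℝ j f x (fun _ => e ω)))| ≤ Lβ * (γ ^ β * |r ω| ^ β) := by
    intro ω
    have h := hHolder x (x - (γ * r ω) • e ω)
    simp only [sub_sub_cancel_left, ← neg_smul] at h
    simp only [hψ_smul] at h
    have hn2 : ‖(-(γ * r ω)) • e ω‖ = γ * |r ω| := by
      rw [norm_smul, he_norm ω, mul_one, Real.norm_eq_abs, abs_neg, abs_mul, abs_of_pos hγ]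
    rw [hn2, hpow ω] at h
    exact h
  have habs_sub : ∀ a b : ℝ, |a - b| ≤ |a| + |b| := by
    intro a b
    rw [sub_eq_add_neg]
    exact (abs_add_le a (-b)).trans_eq (by rw [abs_neg])
  -- integrability of building blocks
  have hKr_int : Integrable (fun ω => K (r ω)) P := by
    refine ⟨(hK_meas.comp hr_meas).aestronglyMeasurable, ?_⟩
    apply HasFiniteIntegral.mono' hK_int.hasFiniteIntegral
    filter_upwards with ω
    rw [Real.norm_eq_abs]
  have hrjK_int : ∀ j : ℕ, Integrable (fun ω => (r ω) ^ j * K (r ω)) P := by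
    intro j
    refine ⟨((hr_meas.pow_const j).mul (hK_meas.comp hr_meas)).aestronglyMeasurable, ?_⟩
    apply HasFiniteIntegral.mono' hK_int.hasFiniteIntegral
    filter_upwards [hr1] with ω hω
    rw [Real.norm_eq_abs, abs_mul, abs_pow]
    calc |r ω| ^ j * |K (r ω)| ≤ 1 * |K (r ω)| := by
          apply mul_le_mul_of_nonneg_right _ (abs_nonneg _)
          exact pow_le_one₀ (abs_nonneg _) hω
    _ = |K (r ω)| := one_mul _
  have hAj_int : ∀ j : ℕ, Integrable (fun ω => ((((d : ℝ) / (2 * γ)) * ((Nat.factorial j : ℝ)⁻¹ * (γ ^ (j:ℕ) - (-γ) ^ (j:ℕ)))) * ((r ω) ^ (j:ℕ) * K (r ω)) * iteratedFDeriv ℝ j f x (fun _ => e ω)) • e ω) P := by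
    intro j
    apply KBAux.integrable_smul_e P e he_meas he_norm
    refine ⟨((measurable_const.mul ((hr_meas.pow_const j).mul
      (hK_meas.comp hr_meas))).mul ((hψ_meas j).comp he_meas)).aestronglyMeasurable, ?_⟩
    apply HasFiniteIntegral.mono'
      ((hK_int.const_mul (|((d : ℝ) / (2 * γ)) * ((Nat.factorial j : ℝ)⁻¹ * (γ ^ (j:ℕ) - (-γ) ^ (j:ℕ)))| * ‖iteratedFDeriv ℝ j f x‖)).hasFiniteIntegral)
    filter_upwards [hr1] with ω hω
    rw [Real.norm_eq_abs, abs_mul, abs_mul, abs_mul (r ω ^ j) (K (r ω)), abs_pow]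
    have h1 : |r ω| ^ j ≤ 1 := pow_le_one₀ (abs_nonneg _) hω
    have h2 : |iteratedFDeriv ℝ j f x (fun _ => e ω)| ≤ ‖iteratedFDeriv ℝ j f x‖ := hψ_bd j (e ω) (he_norm ω)
    calc |((d : ℝ) / (2 * γ)) * ((Nat.factorial j : ℝ)⁻¹ * (γ ^ (j:ℕ) - (-γ) ^ (j:ℕ)))| * (|r ω| ^ j * |K (r ω)|) * |iteratedFDeriv ℝ j f x (fun _ => e ω)|
        ≤ |((d : ℝ) / (2 * γ)) * ((Nat.factorial j : ℝ)⁻¹ * (γ ^ (j:ℕ) - (-γ) ^ (j:ℕ)))| * (1 * |K (r ω)|) * ‖iteratedFDeriv ℝ j f x‖ := by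
          gcongr
    _ = |((d : ℝ) / (2 * γ)) * ((Nat.factorial j : ℝ)⁻¹ * (γ ^ (j:ℕ) - (-γ) ^ (j:ℕ)))| * ‖iteratedFDeriv ℝ j f x‖ * |K (r ω)| := by ring
  have hB_int : Integrable (fun ω => (((d : ℝ) / (2 * γ)) * ((ξ₁ ω - ξ₂ ω) * K (r ω))) • e ω) P := by
    have hindξK : IndepFun (fun ω => ξ₁ ω - ξ₂ ω) (fun ω => K (r ω)) P :=
      hξ_indep.comp (measurable_fst.sub measurable_snd) (hK_meas.comp measurable_snd)
    have hmul : Integrable (fun ω => (ξ₁ ω - ξ₂ ω) * K (r ω)) P :=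
      hindξK.integrable_mul (hξ₁_int.sub hξ₂_int) hKr_int
    exact KBAux.integrable_smul_e P e he_meas he_norm (hmul.const_mul _)
  -- pointwise decompositions
  have hSHe_pt : ∀ ω, (((d : ℝ) / (2 * γ)) * (((∑ j ∈ Finset.range (l + 1), (j.factorial : ℝ)⁻¹ * ((γ * r ω) ^ j * iteratedFDeriv ℝ j f x (fun _ => e ω))) - (∑ j ∈ Finset.range (l + 1), (j.factorial : ℝ)⁻¹ * ((-(γ * r ω)) ^ j * iteratedFDeriv ℝ j f x (fun _ => e ω)))) + (ξ₁ ω - ξ₂ ω)) * K (r ω)) • e ω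
      = (∑ j ∈ Finset.range (l + 1), ((((d : ℝ) / (2 * γ)) * ((Nat.factorial j : ℝ)⁻¹ * (γ ^ (j:ℕ) - (-γ) ^ (j:ℕ)))) * ((r ω) ^ (j:ℕ) * K (r ω)) * iteratedFDeriv ℝ j f x (fun _ => e ω)) • e ω) + (((d : ℝ) / (2 * γ)) * ((ξ₁ ω - ξ₂ ω) * K (r ω))) • e ω := by
    intro ω
    have h1 : (∑ j ∈ Finset.range (l + 1), (j.factorial : ℝ)⁻¹ * ((γ * r ω) ^ j * iteratedFDeriv ℝ j f x (fun _ => e ω))) - (∑ j ∈ Finset.range (l + 1), (j.factorial : ℝ)⁻¹ * ((-(γ * r ω)) ^ j * iteratedFDeriv ℝ j f x (fun _ => e ω))) = ∑ j ∈ Finset.range (l + 1),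
        ((j.factorial : ℝ)⁻¹ * (γ ^ j - (-γ) ^ j)) * ((r ω) ^ j * iteratedFDeriv ℝ j f x (fun _ => e ω)) := by
      rw [← Finset.sum_sub_distrib]
      refine Finset.sum_congr rfl fun j _ => ?_
      have hneg : (-(γ * r ω)) ^ j = (-γ) ^ j * (r ω) ^ j := by
        rw [show -(γ * r ω) = (-γ) * r ω by ring, mul_pow]
      rw [mul_pow, hneg]
      ring
    have h2 : ((d : ℝ) / (2 * γ)) * (((∑ j ∈ Finset.range (l + 1), (j.factorial : ℝ)⁻¹ * ((γ * r ω) ^ j * iteratedFDeriv ℝ j f x (fun _ => e ω))) - (∑ j ∈ Finset.range (l + 1), (j.factorial : ℝ)⁻¹ * ((-(γ * r ω)) ^ j * iteratedFDeriv ℝ j f x (fun _ => e ω)))) + (ξ₁ ω - ξ₂ ω)) * K (r ω) = (∑ j ∈ Finset.range (l + 1),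
        (((d : ℝ) / (2 * γ)) * ((Nat.factorial j : ℝ)⁻¹ * (γ ^ (j:ℕ) - (-γ) ^ (j:ℕ)))) * ((r ω) ^ (j:ℕ) * K (r ω)) * iteratedFDeriv ℝ j f x (fun _ => e ω))
        + ((d : ℝ) / (2 * γ)) * ((ξ₁ ω - ξ₂ ω) * K (r ω)) := by
      rw [h1, mul_add, add_mul, Finset.mul_sum, Finset.sum_mul]
      congr 1
      · exact Finset.sum_congr rfl fun j _ => by ring
      · ring
    rw [h2, add_smul, Finset.sum_smul]
  have hpt : ∀ ω, (((d : ℝ) / (2 * γ) *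
          ((f (x + (γ * r ω) • e ω) + δ (x + (γ * r ω) • e ω) + ξ₁ ω)
            - (f (x - (γ * r ω) • e ω) + δ (x - (γ * r ω) • e ω) + ξ₂ ω)) * K (r ω)) • e ω) = (((d : ℝ) / (2 * γ)) * (((f (x + (γ * r ω) • e ω) - (∑ j ∈ Finset.range (l + 1), (j.factorial : ℝ)⁻¹ * ((γ * r ω) ^ j * iteratedFDeriv ℝ j f x (fun _ => e ω)))) - (f (x - (γ * r ω) • e ω) - (∑ j ∈ Finset.range (l + 1), (j.factorial : ℝ)⁻¹ * ((-(γ * r ω)) ^ j * iteratedFDeriv ℝ j f x (fun _ => e ω))))) + (δ (x + (γ * r ω) • e ω) - δ (x - (γ * r ω) • e ω))) * K (r ω)) • e ω + (((d : ℝ) / (2 * γ)) * (((∑ j ∈ Finset.range (l + 1), (j.factorial : ℝ)⁻¹ * ((γ * r ω) ^ j * iteratedFDeriv ℝ j f x (fun _ => e ω))) - (∑ j ∈ Finset.range (l + 1), (j.factorial : ℝ)⁻¹ * ((-(γ * r ω)) ^ j * iteratedFDeriv ℝ j f x (fun _ => e ω)))) + (ξ₁ ω - ξ₂ ω)) * K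 (r ω)) • e ω := by
    intro ω
    rw [← add_smul]
    congr 1
    ring
  have hSHe_int : Integrable (fun ω => (((d : ℝ) / (2 * γ)) * (((∑ j ∈ Finset.range (l + 1), (j.factorial : ℝ)⁻¹ * ((γ * r ω) ^ j * iteratedFDeriv ℝ j f x (fun _ => e ω))) - (∑ j ∈ Finset.range (l + 1), (j.factorial : ℝ)⁻¹ * ((-(γ * r ω)) ^ j * iteratedFDeriv ℝ j f x (fun _ => e ω)))) + (ξ₁ ω - ξ₂ ω)) * K (r ω)) • e ω) P := by
    apply Integrable.congr ((integrable_finset_sum _ (fun j _ => hAj_int j)).add hB_int)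
    exact ae_of_all _ fun ω => (hSHe_pt ω).symm
  have hSGe_int : Integrable (fun ω => (((d : ℝ) / (2 * γ)) * (((f (x + (γ * r ω) • e ω) - (∑ j ∈ Finset.range (l + 1), (j.factorial : ℝ)⁻¹ * ((γ * r ω) ^ j * iteratedFDeriv ℝ j f x (fun _ => e ω)))) - (f (x - (γ * r ω) • e ω) - (∑ j ∈ Finset.range (l + 1), (j.factorial : ℝ)⁻¹ * ((-(γ * r ω)) ^ j * iteratedFDeriv ℝ j f x (fun _ => e ω))))) + (δ (x + (γ * r ω) • e ω) - δ (x - (γ * r ω) • e ω))) * K (r ω)) • e ω) P := by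
    have heq : (fun ω => (((d : ℝ) / (2 * γ)) * (((f (x + (γ * r ω) • e ω) - (∑ j ∈ Finset.range (l + 1), (j.factorial : ℝ)⁻¹ * ((γ * r ω) ^ j * iteratedFDeriv ℝ j f x (fun _ => e ω)))) - (f (x - (γ * r ω) • e ω) - (∑ j ∈ Finset.range (l + 1), (j.factorial : ℝ)⁻¹ * ((-(γ * r ω)) ^ j * iteratedFDeriv ℝ j f x (fun _ => e ω))))) + (δ (x + (γ * r ω) • e ω) - δ (x - (γ * r ω) • e ω))) * K (r ω)) • e ω)
        = fun ω => (((d : ℝ) / (2 * γ) *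
          ((f (x + (γ * r ω) • e ω) + δ (x + (γ * r ω) • e ω) + ξ₁ ω)
            - (f (x - (γ * r ω) • e ω) + δ (x - (γ * r ω) • e ω) + ξ₂ ω)) * K (r ω)) • e ω) - (((d : ℝ) / (2 * γ)) * (((∑ j ∈ Finset.range (l + 1), (j.factorial : ℝ)⁻¹ * ((γ * r ω) ^ j * iteratedFDeriv ℝ j f x (fun _ => e ω))) - (∑ j ∈ Finset.range (l + 1), (j.factorial : ℝ)⁻¹ * ((-(γ * r ω)) ^ j * iteratedFDeriv ℝ j f x (fun _ => e ω)))) + (ξ₁ ω - ξ₂ ω)) * K (r ω)) • e ω := by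
      funext ω
      rw [hpt ω]
      abel
    rw [heq]
    exact hg_int.sub hSHe_int
  -- the integrals of the Taylor terms
  have hAfact : ∀ j : ℕ, (∫ ω, ((((d : ℝ) / (2 * γ)) * ((Nat.factorial j : ℝ)⁻¹ * (γ ^ (j:ℕ) - (-γ) ^ (j:ℕ)))) * ((r ω) ^ (j:ℕ) * K (r ω)) * iteratedFDeriv ℝ j f x (fun _ => e ω)) • e ω ∂P)
      = (((d : ℝ) / (2 * γ)) * ((Nat.factorial j : ℝ)⁻¹ * (γ ^ (j:ℕ) - (-γ) ^ (j:ℕ)))) • ((∫ ω, (r ω) ^ (j:ℕ) * K (r ω) ∂P)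
          • ∫ ω, (iteratedFDeriv ℝ j f x (fun _ => e ω)) • e ω ∂P) := by
    intro j
    have h1 : (fun ω => ((((d : ℝ) / (2 * γ)) * ((Nat.factorial j : ℝ)⁻¹ * (γ ^ (j:ℕ) - (-γ) ^ (j:ℕ)))) * ((r ω) ^ (j:ℕ) * K (r ω)) * iteratedFDeriv ℝ j f x (fun _ => e ω)) • e ω)
        = fun ω => (((d : ℝ) / (2 * γ)) * ((Nat.factorial j : ℝ)⁻¹ * (γ ^ (j:ℕ) - (-γ) ^ (j:ℕ)))) • ((((r ω) ^ (j:ℕ) * K (r ω)) * iteratedFDeriv ℝ j f x (fun _ => e ω)) • e ω) := by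
      funext ω
      rw [smul_smul]
      congr 1
      ring
    rw [h1, integral_smul]
    congr 1
    exact KBAux.factor P e r he_meas he_norm hr_meas hindep
      (fun t => t ^ j * K t) ((measurable_id.pow_const j).mul hK_meas) (hrjK_int j)
      (fun y => iteratedFDeriv ℝ j f x (fun _ => y)) (hψ_meas j)
      (‖iteratedFDeriv ℝ j f x‖) (hψ_bd j)
  have hgrad_inner : ∀ y : EuclideanSpace ℝ (Fin d),
      iteratedFDeriv ℝ 1 f x (fun _ => y) = ⟪gradient f x, y⟫ := by
    intro y
    rw [show iteratedFDeriv ℝ 1 f x (fun _ => y) = fderiv ℝ f x y from iteratedFDeriv_one_apply _]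
    rw [gradient]
    exact (InnerProductSpace.toDual_symm_apply).symm
  have hA1 : (∫ ω, ((((d : ℝ) / (2 * γ)) * ((Nat.factorial 1 : ℝ)⁻¹ * (γ ^ (1:ℕ) - (-γ) ^ (1:ℕ)))) * ((r ω) ^ (1:ℕ) * K (r ω)) * iteratedFDeriv ℝ 1 f x (fun _ => e ω)) • e ω ∂P) = gradient f x := by
    rw [hAfact 1]
    have h1 : ∫ ω, (r ω) ^ (1:ℕ) * K (r ω) ∂P = 1 := by
      simpa [pow_one] using hK1
    have h2 : (fun ω => (iteratedFDeriv ℝ 1 f x (fun _ => e ω)) • e ω)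
        = fun ω => (⟪gradient f x, e ω⟫ : ℝ) • e ω := by
      funext ω
      rw [hgrad_inner]
    rw [h1, one_smul, h2, KBAux.sphere_iso P e he_meas he_norm he_unif (gradient f x), smul_smul]
    rw [show (((d : ℝ) / (2 * γ)) * ((Nat.factorial 1 : ℝ)⁻¹ * (γ ^ (1:ℕ) - (-γ) ^ (1:ℕ)))) * (d:ℝ)⁻¹ = 1 from by
      simp only [Nat.factorial_one, Nat.cast_one, inv_one, pow_one]
      field_simp
      ring]
    exact one_smul _ _
  have hA0 : ∀ j ∈ Finset.range (l + 1), j ≠ 1 → (∫ ω, ((((d : ℝ) / (2 * γ)) * ((Nat.factorial j : ℝ)⁻¹ * (γ ^ (j:ℕ) - (-γ) ^ (j:ℕ)))) * ((r ω) ^ (j:ℕ) * K (r ω)) * iteratedFDeriv ℝ j f x (fun _ => e ω)) • e ω ∂P) = 0 := by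
    intro j hjmem hj1
    rcases Nat.even_or_odd j with hje | hjo
    · rw [hAfact j, hje.neg_pow, sub_self, mul_zero, mul_zero, zero_smul]
    · have h2j : 2 ≤ j := by
        have := Nat.odd_iff.mp hjo
        omega
      have hjl : j ≤ l := Nat.lt_succ_iff.mp (Finset.mem_range.mp hjmem)
      rw [hAfact j, hKj j h2j hjl, zero_smul, smul_zero]
  have hKe_int : Integrable (fun ω => K (r ω) • e ω) P :=
    KBAux.integrable_smul_e P e he_meas he_norm hKr_int
  have hKe : ∫ ω, K (r ω) • e ω ∂P = 0 := by
    have hfac := KBAux.factor P e r he_meas he_norm hr_meas hindep K hK_meas hKr_int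
      (fun _ => (1:ℝ)) measurable_const 1 (fun y _ => by norm_num)
    calc ∫ ω, K (r ω) • e ω ∂P = ∫ ω, (K (r ω) * (1:ℝ)) • e ω ∂P := by simp
    _ = (∫ ω, K (r ω) ∂P) • ∫ ω, (1:ℝ) • e ω ∂P := hfac
    _ = 0 := by rw [hK0, zero_smul]
  have hB0 : (∫ ω, (((d : ℝ) / (2 * γ)) * ((ξ₁ ω - ξ₂ ω) * K (r ω))) • e ω ∂P) = 0 := by
    ext k
    calc (∫ ω, (((d : ℝ) / (2 * γ)) * ((ξ₁ ω - ξ₂ ω) * K (r ω))) • e ω ∂P) k = ∫ ω, ((((d : ℝ) / (2 * γ)) * ((ξ₁ ω - ξ₂ ω) * K (r ω))) • e ω) k ∂P := KBAux.integral_coord P _ hB_int k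
    _ = ∫ ω, (ξ₁ ω - ξ₂ ω) * (((d : ℝ) / (2 * γ)) * (K (r ω) * e ω k)) ∂P := by
        refine integral_congr_ae (ae_of_all _ fun ω => ?_)
        simp only [PiLp.smul_apply, smul_eq_mul]
        ring
    _ = (∫ ω, (ξ₁ ω - ξ₂ ω) ∂P) * ∫ ω, ((d : ℝ) / (2 * γ)) * (K (r ω) * e ω k) ∂P := by
        apply IndepFun.integral_fun_mul_eq_mul_integral
        · exact hξ_indep.comp (measurable_fst.sub measurable_snd)
            (measurable_const.mul ((hK_meas.comp measurable_snd).mul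
              ((measurable_pi_apply k).comp ((WithLp.measurable_ofLp 2 _).comp measurable_fst))))
        · exact (hξ₁_int.sub hξ₂_int).aestronglyMeasurable
        · apply Integrable.aestronglyMeasurable
          apply Integrable.const_mul
          refine ⟨((hK_meas.comp hr_meas).mul
            (KBAux.sphere_meas_coord e he_meas k)).aestronglyMeasurable, ?_⟩
          apply HasFiniteIntegral.mono' hK_int.hasFiniteIntegral
          filter_upwards with ω
          rw [Real.norm_eq_abs, abs_mul]
          calc |K (r ω)| * |e ω k| ≤ |K (r ω)| * 1 := by
                apply mul_le_mul_of_nonneg_left _ (abs_nonneg _)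
                exact (he_norm ω) ▸ KBAux.abs_coord_le (e ω) k
          _ = |K (r ω)| := mul_one _
    _ = (0 : EuclideanSpace ℝ (Fin d)) k := by
        have h7 : ∫ ω, K (r ω) * e ω k ∂P = 0 := by
          have h8 := KBAux.integral_coord P _ hKe_int k
          rw [hKe] at h8
          have h9 : (fun ω => (K (r ω) • e ω) k) = fun ω => K (r ω) * e ω k := by
            funext ω
            rw [PiLp.smul_apply, smul_eq_mul]
          rw [h9] at h8
          simpa using h8.symm
        have h6 : ∫ ω, ((d : ℝ) / (2 * γ)) * (K (r ω) * e ω k) ∂P = 0 := by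
          rw [integral_const_mul, h7, mul_zero]
        rw [h6, mul_zero]
        simp
  have hgrad : (∫ ω, (((d : ℝ) / (2 * γ)) * (((∑ j ∈ Finset.range (l + 1), (j.factorial : ℝ)⁻¹ * ((γ * r ω) ^ j * iteratedFDeriv ℝ j f x (fun _ => e ω))) - (∑ j ∈ Finset.range (l + 1), (j.factorial : ℝ)⁻¹ * ((-(γ * r ω)) ^ j * iteratedFDeriv ℝ j f x (fun _ => e ω)))) + (ξ₁ ω - ξ₂ ω)) * K (r ω)) • e ω ∂P) = gradient f x := by
    rw [integral_congr_ae (ae_of_all _ hSHe_pt),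
      integral_add (integrable_finset_sum _ (fun j _ => hAj_int j)) hB_int,
      integral_finset_sum _ (fun j _ => hAj_int j), hB0, add_zero,
      Finset.sum_eq_single_of_mem 1 (Finset.mem_range.mpr (by omega))
        (fun j hj hne => hA0 j hj hne)]
    exact hA1
  rw [show (∫ ω, ((d : ℝ) / (2 * γ) *
          ((f (x + (γ * r ω) • e ω) + δ (x + (γ * r ω) • e ω) + ξ₁ ω)
            - (f (x - (γ * r ω) • e ω) + δ (x - (γ * r ω) • e ω) + ξ₂ ω)) * K (r ω)) • e ω ∂P) = gradient f x + ∫ ω, (((d : ℝ) / (2 * γ)) * (((f (x + (γ * r ω) • e ω) - (∑ j ∈ Finset.range (l + 1), (j.factorial : ℝ)⁻¹ * ((γ * r ω) ^ j * iteratedFDeriv ℝ j f x (fun _ => e ω)))) - (f (x - (γ * r ω) • e ω) - (∑ j ∈ Finset.range (l + 1), (j.factorial : ℝ)⁻¹ * ((-(γ * r ω)) ^ j * iteratedFDeriv ℝ j f x (fun _ => e ω))))) + (δ (x + (γ * r ω) • e ω) - δ (x - (γ * r ω) • e ω))) * K (r ω)) • e ω ∂P from by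
    rw [integral_congr_ae (ae_of_all _ hpt), integral_add hSGe_int hSHe_int, hgrad, add_comm]]
  rw [add_sub_cancel_left]
  -- final bound
  have hBd_eq : (fun ω => ((d : ℝ) / (2 * γ)) * ((2 * Lβ * (γ ^ β * |r ω| ^ β) + 2 * Δ) * |K (r ω)|))
      = fun ω => (((d : ℝ) / (2 * γ)) * (2 * Lβ * γ ^ β)) * (|r ω| ^ β * |K (r ω)|)
          + (((d : ℝ) / (2 * γ)) * (2 * Δ)) * |K (r ω)| := by
    funext ω
    ring
  have hBd_int : Integrable (fun ω => ((d : ℝ) / (2 * γ)) * ((2 * Lβ * (γ ^ β * |r ω| ^ β) + 2 * Δ) * |K (r ω)|)) P := by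
    rw [hBd_eq]
    exact (hKβ_int.const_mul _).add (hK_int.const_mul _)
  have hptB : ∀ ω, ‖(((d : ℝ) / (2 * γ)) * (((f (x + (γ * r ω) • e ω) - (∑ j ∈ Finset.range (l + 1), (j.factorial : ℝ)⁻¹ * ((γ * r ω) ^ j * iteratedFDeriv ℝ j f x (fun _ => e ω)))) - (f (x - (γ * r ω) • e ω) - (∑ j ∈ Finset.range (l + 1), (j.factorial : ℝ)⁻¹ * ((-(γ * r ω)) ^ j * iteratedFDeriv ℝ j f x (fun _ => e ω))))) + (δ (x + (γ * r ω) • e ω) - δ (x - (γ * r ω) • e ω))) * K (r ω)) • e ω‖ ≤ ((d : ℝ) / (2 * γ)) * ((2 * Lβ * (γ ^ β * |r ω| ^ β) + 2 * Δ) * |K (r ω)|) := by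
    intro ω
    rw [norm_smul, he_norm ω, mul_one, Real.norm_eq_abs]
    have hW : |((f (x + (γ * r ω) • e ω) - (∑ j ∈ Finset.range (l + 1), (j.factorial : ℝ)⁻¹ * ((γ * r ω) ^ j * iteratedFDeriv ℝ j f x (fun _ => e ω)))) - (f (x - (γ * r ω) • e ω) - (∑ j ∈ Finset.range (l + 1), (j.factorial : ℝ)⁻¹ * ((-(γ * r ω)) ^ j * iteratedFDeriv ℝ j f x (fun _ => e ω))))) + (δ (x + (γ * r ω) • e ω) - δ (x - (γ * r ω) • e ω))|
        ≤ 2 * Lβ * (γ ^ β * |r ω| ^ β) + 2 * Δ := by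
      have h1 := hRp ω
      have h2 := hRm ω
      have h3 := hδ (x + (γ * r ω) • e ω)
      have h4 := hδ (x - (γ * r ω) • e ω)
      calc |((f (x + (γ * r ω) • e ω) - (∑ j ∈ Finset.range (l + 1), (j.factorial : ℝ)⁻¹ * ((γ * r ω) ^ j * iteratedFDeriv ℝ j f x (fun _ => e ω)))) - (f (x - (γ * r ω) • e ω) - (∑ j ∈ Finset.range (l + 1), (j.factorial : ℝ)⁻¹ * ((-(γ * r ω)) ^ j * iteratedFDeriv ℝ j f x (fun _ => e ω))))) + (δ (x + (γ * r ω) • e ω) - δ (x - (γ * r ω) • e ω))|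
          ≤ |(f (x + (γ * r ω) • e ω) - (∑ j ∈ Finset.range (l + 1), (j.factorial : ℝ)⁻¹ * ((γ * r ω) ^ j * iteratedFDeriv ℝ j f x (fun _ => e ω)))) - (f (x - (γ * r ω) • e ω) - (∑ j ∈ Finset.range (l + 1), (j.factorial : ℝ)⁻¹ * ((-(γ * r ω)) ^ j * iteratedFDeriv ℝ j f x (fun _ => e ω))))| + |δ (x + (γ * r ω) • e ω) - δ (x - (γ * r ω) • e ω)| := abs_add_le _ _
      _ ≤ (|f (x + (γ * r ω) • e ω) - (∑ j ∈ Finset.range (l + 1), (j.factorial : ℝ)⁻¹ * ((γ * r ω) ^ j * iteratedFDeriv ℝ j f x (fun _ => e ω)))| + |f (x - (γ * r ω) • e ω) - (∑ j ∈ Finset.range (l + 1), (j.factorial : ℝ)⁻¹ * ((-(γ * r ω)) ^ j * iteratedFDeriv ℝ j f x (fun _ => e ω)))|) + (|δ (x + (γ * r ω) • e ω)| + |δ (x - (γ * r ω) • e ω)|) :=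
          add_le_add (habs_sub _ _) (habs_sub _ _)
      _ ≤ 2 * Lβ * (γ ^ β * |r ω| ^ β) + 2 * Δ := by linarith
    calc |((d : ℝ) / (2 * γ)) * (((f (x + (γ * r ω) • e ω) - (∑ j ∈ Finset.range (l + 1), (j.factorial : ℝ)⁻¹ * ((γ * r ω) ^ j * iteratedFDeriv ℝ j f x (fun _ => e ω)))) - (f (x - (γ * r ω) • e ω) - (∑ j ∈ Finset.range (l + 1), (j.factorial : ℝ)⁻¹ * ((-(γ * r ω)) ^ j * iteratedFDeriv ℝ j f x (fun _ => e ω))))) + (δ (x + (γ * r ω) • e ω) - δ (x - (γ * r ω) • e ω))) * K (r ω)|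
        = ((d : ℝ) / (2 * γ)) * |((f (x + (γ * r ω) • e ω) - (∑ j ∈ Finset.range (l + 1), (j.factorial : ℝ)⁻¹ * ((γ * r ω) ^ j * iteratedFDeriv ℝ j f x (fun _ => e ω)))) - (f (x - (γ * r ω) • e ω) - (∑ j ∈ Finset.range (l + 1), (j.factorial : ℝ)⁻¹ * ((-(γ * r ω)) ^ j * iteratedFDeriv ℝ j f x (fun _ => e ω))))) + (δ (x + (γ * r ω) • e ω) - δ (x - (γ * r ω) • e ω))| * |K (r ω)| := by
          rw [abs_mul, abs_mul, abs_of_nonneg hd2γ]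
    _ ≤ ((d : ℝ) / (2 * γ)) * (2 * Lβ * (γ ^ β * |r ω| ^ β) + 2 * Δ) * |K (r ω)| := by
          apply mul_le_mul_of_nonneg_right _ (abs_nonneg _)
          exact mul_le_mul_of_nonneg_left hW hd2γ
    _ = ((d : ℝ) / (2 * γ)) * ((2 * Lβ * (γ ^ β * |r ω| ^ β) + 2 * Δ) * |K (r ω)|) := by ring
  refine le_trans (norm_integral_le_of_norm_le hBd_int (ae_of_all _ hptB)) ?_
  have h8 : ∫ ω, ((d : ℝ) / (2 * γ)) * ((2 * Lβ * (γ ^ β * |r ω| ^ β) + 2 * Δ) * |K (r ω)|) ∂P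
      = (((d : ℝ) / (2 * γ)) * (2 * Lβ * γ ^ β)) * (∫ ω, |r ω| ^ β * |K (r ω)| ∂P)
        + (((d : ℝ) / (2 * γ)) * (2 * Δ)) * (∫ ω, |K (r ω)| ∂P) := by
    rw [hBd_eq, integral_add (hKβ_int.const_mul _) (hK_int.const_mul _),
      integral_const_mul, integral_const_mul]
  rw [h8]
  have h9 : γ ^ (β - 1) = γ ^ β / γ := by
    rw [Real.rpow_sub hγ, Real.rpow_one]
  rw [h9]
  apply le_of_eq
  field_simp
end KBAux
end
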